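/- arXiv:2109.06994 — 4 statements merged into one kernel-verified Lean document; each statement's English description precedes it below -/
import Mathlib

section
/- Let g : ℝ → ℝ be a C¹ function and suppose there exists an integer i ≥ 1 such that i² < g'(x) < (i+1)² for all x ∈ ℝ. Let s be a positive integer and let f : ℝ → ℝ be a continuous function that is (2π/s)-periodic. Then every C² function u : ℝ → ℝ that is 2π-periodic and satisfies -u''(t) + g(u(t)) = f(t) for all t ∈ ℝ is (2π/s)-periodic, i.e. u(t + 2π/s) = u(t) for all t ∈ ℝ. -/
open Real

/-- Maximum-principle lemma: a `C²` `2π`-periodic function whose second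
derivative is positive wherever the function is positive must be `≤ 0`. -/
lemma max_principle_aux (W : ℝ → ℝ) (hW : ContDiff ℝ 2 W)
    (hper : Function.Periodic W (2 * π))
    (hpos : ∀ t, 0 < W t → 0 < deriv (deriv W) t) : ∀ t, W t ≤ 0 := by
  have hWd : Differentiable ℝ W := hW.differentiable (by norm_num)
  have hWc : Continuous W := hWd.continuous
  have hW1 : ContDiff ℝ 1 (deriv W) := by
    have := (contDiff_succ_iff_deriv (n := 1)).mp (by exact_mod_cast hW)
    exact this.2.2
  have hW1d : Differentiable ℝ (deriv W) := hW1.differentiable (by norm_num)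
  -- max on [0, 2π]
  obtain ⟨t0, ht0mem, ht0⟩ := isCompact_Icc.exists_isMaxOn
    (Set.nonempty_Icc.mpr (by positivity)) (hWc.continuousOn (s := Set.Icc 0 (2 * π)))
  have hglobal : ∀ t, W t ≤ W t0 := by
    intro t
    obtain ⟨y, hy, hWy⟩ := hper.exists_mem_Ico₀ two_pi_pos t
    rw [hWy]
    exact ht0 (Set.mem_Icc.mpr ⟨hy.1, hy.2.le⟩)
  have hmax : IsLocalMax W t0 := by
    refine IsMaxOn.isLocalMax (s := Set.univ) ?_ Filter.univ_mem
    intro x _; exact hglobal x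
  have hd0 : deriv W t0 = 0 := hmax.deriv_eq_zero
  by_contra hcon
  push_neg at hcon
  obtain ⟨t, ht⟩ := hcon
  have ht0pos : 0 < W t0 := lt_of_lt_of_le ht (hglobal t)
  -- eventually W > 0 near t0, hence W'' > 0 near t0
  have hev : ∀ᶠ x in nhds t0, 0 < deriv (deriv W) x := by
    have h1 : ∀ᶠ x in nhds t0, 0 < W x :=
      (hWc.continuousAt (x := t0)).eventually (eventually_gt_nhds ht0pos)
    exact h1.mono fun x hx => hpos x hx
  obtain ⟨ε, hε, hball⟩ := Metric.eventually_nhds_iff.mp hev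
  set δ := ε / 2 with hδdef
  have hδ : 0 < δ := by positivity
  have hmem : ∀ x ∈ Set.Icc t0 (t0 + δ), 0 < deriv (deriv W) x := by
    intro x hx
    apply hball
    rw [Real.dist_eq, abs_lt]
    constructor <;> [linarith [hx.1]; linarith [hx.2]]
  -- deriv W strictly increasing on [t0, t0+δ]
  have hmono1 : StrictMonoOn (deriv W) (Set.Icc t0 (t0 + δ)) := by
    apply strictMonoOn_of_deriv_pos (convex_Icc _ _) (hW1d.continuous.continuousOn)
    intro x hx
    rw [interior_Icc] at hx
    exact hmem x ⟨hx.1.le, hx.2.le⟩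
  have hderivpos : ∀ x ∈ Set.Ioo t0 (t0 + δ), 0 < deriv W x := by
    intro x hx
    have := hmono1 (Set.left_mem_Icc.mpr (by linarith)) ⟨hx.1.le, hx.2.le⟩ hx.1
    rwa [hd0] at this
  have hmono2 : StrictMonoOn W (Set.Icc t0 (t0 + δ)) := by
    apply strictMonoOn_of_deriv_pos (convex_Icc _ _) (hWc.continuousOn)
    intro x hx
    rw [interior_Icc] at hx
    exact hderivpos x hx
  have : W t0 < W (t0 + δ) :=
    hmono2 (Set.left_mem_Icc.mpr (by linarith))
      (Set.right_mem_Icc.mpr (by linarith)) (by linarith)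
  exact absurd (hglobal (t0 + δ)) (not_le.mpr this)

/-- Preservation of symmetry: if `g'` is squeezed strictly between consecutive
eigenvalues `i²` and `(i+1)²` of the periodic problem, and `f` is continuous and
`2π/s`-periodic, then every `C²` `2π`-periodic solution `u` of `-u'' + g(u) = f`
is `2π/s`-periodic. -/
theorem preservation_of_symmetry
    (g : ℝ → ℝ) (hg : ContDiff ℝ 1 g)
    (i : ℕ) (hi : 1 ≤ i)
    (hlow : ∀ x : ℝ, (i : ℝ) ^ 2 < deriv g x)
    (hhigh : ∀ x : ℝ, deriv g x < ((i : ℝ) + 1) ^ 2)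
    (s : ℕ) (hs : 0 < s)
    (f : ℝ → ℝ) (hf : Continuous f)
    (hfper : Function.Periodic f (2 * π / s))
    (u : ℝ → ℝ) (hu : ContDiff ℝ 2 u)
    (huper : Function.Periodic u (2 * π))
    (hueq : ∀ t : ℝ, -(deriv (deriv u) t) + g (u t) = f t) :
    Function.Periodic u (2 * π / s) := by
  set T : ℝ := 2 * π / s with hT
  -- g is strictly monotone
  have hgmono : StrictMono g := by
    apply strictMono_of_deriv_pos
    intro x
    have h1 : (1 : ℝ) ≤ (i : ℝ) := by exact_mod_cast hi
    have := hlow x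
    nlinarith
  set w : ℝ → ℝ := fun t => u (t + T) - u t with hw
  have hushift : ContDiff ℝ 2 (fun t : ℝ => u (t + T)) :=
    hu.comp (contDiff_id.add contDiff_const)
  have hw2 : ContDiff ℝ 2 w := hushift.sub hu
  have hud : Differentiable ℝ u := hu.differentiable (by norm_num)
  -- first derivative of w
  have hdw : deriv w = fun t => deriv u (t + T) - deriv u t := by
    funext t
    rw [hw]
    rw [deriv_fun_sub ((hushift.differentiable (by norm_num)) t) (hud t)]
    rw [deriv_comp_add_const]
  -- second derivative of w
  have hdu2 : Differentiable ℝ (deriv u) := by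
    have := (contDiff_succ_iff_deriv (n := 1)).mp (by exact_mod_cast hu)
    exact this.2.2.differentiable (by norm_num)
  have hdushift : Differentiable ℝ (fun t : ℝ => deriv u (t + T)) :=
    hdu2.comp (differentiable_id.add_const T)
  have hddw : ∀ t, deriv (deriv w) t = g (u (t + T)) - g (u t) := by
    intro t
    rw [hdw]
    rw [deriv_fun_sub (hdushift t) (hdu2 t)]
    rw [deriv_comp_add_const]
    have h1 := hueq (t + T)
    have h2 := hueq t
    have hf1 : f (t + T) = f t := hfper t
    linarith
  have hwper : Function.Periodic w (2 * π) := by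
    intro t
    simp only [hw]
    have h1 : t + 2 * π + T = t + T + 2 * π := by ring
    rw [h1, huper (t + T), huper t]
  -- apply the maximum principle to w and -w
  have hwle : ∀ t, w t ≤ 0 := by
    apply max_principle_aux w hw2 hwper
    intro t ht
    rw [hddw t]
    have : u t < u (t + T) := by
      have : 0 < u (t + T) - u t := ht
      linarith
    have := hgmono this
    linarith
  have hwge : ∀ t, -(w t) ≤ 0 := by
    have hnegderiv : deriv (fun t => -(w t)) = fun t => -(deriv w t) := by
      funext t; exact deriv.neg
    apply max_principle_aux (fun t => -(w t)) hw2.neg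
    · intro t
      simp only []
      rw [hwper t]
    · intro t ht
      rw [hnegderiv]
      have h2 : deriv (fun t => -(deriv w t)) t = -(deriv (deriv w) t) := deriv.neg
      rw [h2, hddw t]
      have hlt : u (t + T) < u t := by
        have : 0 < -(u (t + T) - u t) := ht
        linarith
      have := hgmono hlt
      linarith
  intro t
  have h1 := hwle t
  have h2 := hwge t
  have : w t = 0 := le_antisymm h1 (by linarith)
  have : u (t + T) - u t = 0 := this
  linarith
end

section
/- Let g : ℝ → ℝ be a C¹ function and suppose there exists an integer i ≥ 1 such that i² < g'(x) < (i+1)² for all x ∈ ℝ. Let s be a positive integer and let f : ℝ → ℝ be a continuous function that is (2π/s)-periodic. Then there exists exactly one C² 2π-periodic function u : ℝ → ℝ satisfying -u''(t) + g(u(t)) = f(t) for all t ∈ ℝ, and this unique solution is (2π/s)-periodic. -/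
open Real

namespace PoSym

open MeasureTheory Set Filter Topology intervalIntegral

noncomputable section

variable {ω : ℝ} {h : ℝ → ℝ} {C : ℝ}

lemma integrableOn_exp_mul_Iic (hω : 0 < ω) (t : ℝ) :
    IntegrableOn (fun s => Real.exp (ω * s)) (Iic t) := by
  have h1 : IntegrableOn (fun x => Real.exp (-ω * x)) (Ici (-t)) :=
    (integrableOn_Ici_iff_integrableOn_Ioi).2 (exp_neg_integrableOn_Ioi _ hω)
  have h2 := ((Measure.measurePreserving_neg (volume : Measure ℝ)).integrableOn_comp_preimage
      (Homeomorph.neg ℝ).measurableEmbedding).2 h1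
  simp only [Function.comp_def] at h2
  have hs : (Neg.neg ⁻¹' (Ici (-t)) : Set ℝ) = Iic t := by ext x; simp
  rw [hs] at h2
  refine h2.congr_fun (fun x _ => ?_) measurableSet_Iic
  ring_nf

lemma intA (hω : 0 < ω) (hh : Continuous h) (hC : ∀ s, |h s| ≤ C) (t : ℝ) :
    IntegrableOn (fun s => h s * Real.exp (ω * s)) (Iic t) :=
  Integrable.bdd_mul (integrableOn_exp_mul_Iic hω t)
    hh.aestronglyMeasurable.restrict (ae_of_all _ fun s => by simpa using hC s)

lemma integral_exp_mul_Iic (hω : 0 < ω) (t : ℝ) :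
    ∫ s in Iic t, Real.exp (ω * s) = Real.exp (ω * t) / ω := by
  have hder : ∀ x ∈ Iic t, HasDerivAt (fun s : ℝ => Real.exp (ω * s) / ω)
      (Real.exp (ω * x)) x := by
    intro x _
    have h1 : HasDerivAt (fun s : ℝ => ω * s) ω x := by
      simpa using (hasDerivAt_id x).const_mul ω
    have := (Real.hasDerivAt_exp (ω * x)).comp x h1
    have h2 := this.div_const ω
    have hx : Real.exp (ω * x) * ω / ω = Real.exp (ω * x) :=
      mul_div_cancel_right₀ _ (ne_of_gt hω)
    rw [hx] at h2
    exact h2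
  have htend : Tendsto (fun s : ℝ => Real.exp (ω * s) / ω) atBot (𝓝 0) := by
    have h1 : Tendsto (fun s : ℝ => ω * s) atBot atBot :=
      Tendsto.const_mul_atBot hω tendsto_id
    have := Real.tendsto_exp_atBot.comp h1
    simpa using this.div_const ω
  have := integral_Iic_of_hasDerivAt_of_tendsto' hder (integrableOn_exp_mul_Iic hω t) htend
  simpa using this


/-- One-sided Green integral. -/
def GA (ω : ℝ) (h : ℝ → ℝ) (t : ℝ) : ℝ := ∫ s in Iic t, h s * Real.exp (ω * s)

def GB (ω : ℝ) (h : ℝ → ℝ) (t : ℝ) : ℝ := GA ω (fun x => h (-x)) (-t)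

/-- Green's operator for `-u'' + ω² u`. -/
def K (ω : ℝ) (h : ℝ → ℝ) (t : ℝ) : ℝ :=
  (2 * ω)⁻¹ * (Real.exp (-(ω * t)) * GA ω h t + Real.exp (ω * t) * GB ω h t)

/-- Derivative of the Green's operator. -/
def K' (ω : ℝ) (h : ℝ → ℝ) (t : ℝ) : ℝ :=
  2⁻¹ * (-(Real.exp (-(ω * t)) * GA ω h t) + Real.exp (ω * t) * GB ω h t)

lemma abs_GA_le (hω : 0 < ω) (hh : Continuous h) (hC : ∀ s, |h s| ≤ C) (t : ℝ) :
    |GA ω h t| ≤ C / ω * Real.exp (ω * t) := by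
  have hint : IntegrableOn (fun s : ℝ => C * Real.exp (ω * s)) (Iic t) :=
    (integrableOn_exp_mul_Iic hω t).const_mul C
  have h1 : ‖∫ s in Iic t, h s * Real.exp (ω * s)‖ ≤ ∫ s in Iic t, C * Real.exp (ω * s) := by
    refine norm_integral_le_of_norm_le hint (ae_of_all _ fun s => ?_)
    rw [norm_mul, Real.norm_eq_abs, Real.norm_eq_abs, abs_of_pos (Real.exp_pos _)]
    exact mul_le_mul_of_nonneg_right (hC s) (Real.exp_pos _).le
  have h2 : ∫ s in Iic t, C * Real.exp (ω * s) = C / ω * Real.exp (ω * t) := by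
    rw [MeasureTheory.integral_const_mul, integral_exp_mul_Iic hω]
    ring
  rw [h2] at h1
  simpa [GA, Real.norm_eq_abs] using h1

lemma abs_GB_le (hω : 0 < ω) (hh : Continuous h) (hC : ∀ s, |h s| ≤ C) (t : ℝ) :
    |GB ω h t| ≤ C / ω * Real.exp (-(ω * t)) := by
  have := abs_GA_le hω (hh.comp continuous_neg) (fun s => hC (-s)) (-t)
  simpa [GB, mul_comm, Function.comp_def] using this

lemma hasDerivAt_GA (hω : 0 < ω) (hh : Continuous h) (hC : ∀ s, |h s| ≤ C) (t : ℝ) :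
    HasDerivAt (GA ω h) (h t * Real.exp (ω * t)) t := by
  have hcont : Continuous fun s => h s * Real.exp (ω * s) :=
    hh.mul (Real.continuous_exp.comp (continuous_const.mul continuous_id))
  have hrepr : ∀ b : ℝ, GA ω h b = GA ω h 0 + ∫ s in (0:ℝ)..b, h s * Real.exp (ω * s) := by
    intro b
    have := integral_Iic_sub_Iic (intA hω hh hC 0) (intA hω hh hC b)
    unfold GA
    linarith [this]
  have hderiv : HasDerivAt (fun b => GA ω h 0 + ∫ s in (0:ℝ)..b, h s * Real.exp (ω * s))
      (h t * Real.exp (ω * t)) t := by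
    refine HasDerivAt.const_add _ ?_
    exact intervalIntegral.integral_hasDerivAt_right (hcont.intervalIntegrable 0 t)
      (hcont.stronglyMeasurableAtFilter _ _) hcont.continuousAt
  exact hderiv.congr_of_eventuallyEq (Filter.Eventually.of_forall fun b => (hrepr b))


lemma hasDerivAt_GB (hω : 0 < ω) (hh : Continuous h) (hC : ∀ s, |h s| ≤ C) (t : ℝ) :
    HasDerivAt (GB ω h) (-(h t * Real.exp (-(ω * t)))) t := by
  have hA := hasDerivAt_GA hω (hh.comp continuous_neg) (fun s => hC (-s)) (-t)
  have hneg : HasDerivAt (fun x : ℝ => -x) (-1 : ℝ) t := hasDerivAt_neg t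
  have := HasDerivAt.comp t hA hneg
  simp [GB, Function.comp_def, mul_comm] at this; exact this

lemma hasDerivAt_K (hω : 0 < ω) (hh : Continuous h) (hC : ∀ s, |h s| ≤ C) (t : ℝ) :
    HasDerivAt (K ω h) (K' ω h t) t := by
  have hA := hasDerivAt_GA hω hh hC t
  have hB := hasDerivAt_GB hω hh hC t
  have he1 : HasDerivAt (fun t : ℝ => Real.exp (-(ω * t))) (-ω * Real.exp (-(ω * t))) t := by
    have h1 : HasDerivAt (fun t : ℝ => -(ω * t)) (-ω) t := by
      exact ((hasDerivAt_id' t).const_mul ω).neg.congr_deriv (by ring)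
    exact ((Real.hasDerivAt_exp (-(ω * t))).comp t h1).congr_deriv (g' := -ω * Real.exp (-(ω * t))) (by ring)
  have he2 : HasDerivAt (fun t : ℝ => Real.exp (ω * t)) (ω * Real.exp (ω * t)) t := by
    have h1 : HasDerivAt (fun t : ℝ => ω * t) ω t := by
      simpa using (hasDerivAt_id t).const_mul ω
    exact ((Real.hasDerivAt_exp (ω * t)).comp t h1).congr_deriv (by ring)
  have h1 := (he1.mul hA).add (he2.mul hB)
  have h2 := h1.const_mul (2 * ω)⁻¹
  have : (2 * ω)⁻¹ * (-ω * Real.exp (-(ω * t)) * GA ω h t +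
        Real.exp (-(ω * t)) * (h t * Real.exp (ω * t)) +
        (ω * Real.exp (ω * t) * GB ω h t +
          Real.exp (ω * t) * -(h t * Real.exp (-(ω * t))))) = K' ω h t := by
    unfold K'
    have hω' : ω ≠ 0 := ne_of_gt hω
    field_simp
    ring
  rw [this] at h2
  exact h2

lemma hasDerivAt_K' (hω : 0 < ω) (hh : Continuous h) (hC : ∀ s, |h s| ≤ C) (t : ℝ) :
    HasDerivAt (K' ω h) (ω ^ 2 * K ω h t - h t) t := by
  have hA := hasDerivAt_GA hω hh hC t
  have hB := hasDerivAt_GB hω hh hC t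
  have he1 : HasDerivAt (fun t : ℝ => Real.exp (-(ω * t))) (-ω * Real.exp (-(ω * t))) t := by
    have h1 : HasDerivAt (fun t : ℝ => -(ω * t)) (-ω) t := by
      exact ((hasDerivAt_id' t).const_mul ω).neg.congr_deriv (by ring)
    exact ((Real.hasDerivAt_exp (-(ω * t))).comp t h1).congr_deriv (g' := -ω * Real.exp (-(ω * t))) (by ring)
  have he2 : HasDerivAt (fun t : ℝ => Real.exp (ω * t)) (ω * Real.exp (ω * t)) t := by
    have h1 : HasDerivAt (fun t : ℝ => ω * t) ω t := by
      simpa using (hasDerivAt_id t).const_mul ω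
    exact ((Real.hasDerivAt_exp (ω * t)).comp t h1).congr_deriv (by ring)
  have h1 := ((he1.mul hA).neg.add (he2.mul hB)).const_mul (2 : ℝ)⁻¹
  have : (2 : ℝ)⁻¹ * (-(-ω * Real.exp (-(ω * t)) * GA ω h t +
        Real.exp (-(ω * t)) * (h t * Real.exp (ω * t))) +
        (ω * Real.exp (ω * t) * GB ω h t +
          Real.exp (ω * t) * -(h t * Real.exp (-(ω * t))))) = ω ^ 2 * K ω h t - h t := by
    unfold K
    have hω' : ω ≠ 0 := ne_of_gt hω
    have hprod : Real.exp (-(ω * t)) * Real.exp (ω * t) = 1 := by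
      rw [← Real.exp_add]; simp
    field_simp
    linear_combination (-(2 * h t)) * hprod
  rw [this] at h1
  exact h1

lemma abs_K_le (hω : 0 < ω) (hh : Continuous h) (hC : ∀ s, |h s| ≤ C) (t : ℝ) :
    |K ω h t| ≤ C / ω ^ 2 := by
  have hA := abs_GA_le hω hh hC t
  have hB := abs_GB_le hω hh hC t
  have e1 : (0:ℝ) < Real.exp (-(ω * t)) := Real.exp_pos _
  have e2 : (0:ℝ) < Real.exp (ω * t) := Real.exp_pos _
  have key : |Real.exp (-(ω * t)) * GA ω h t + Real.exp (ω * t) * GB ω h t| ≤ 2 * C / ω := by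
    calc |Real.exp (-(ω * t)) * GA ω h t + Real.exp (ω * t) * GB ω h t|
        ≤ |Real.exp (-(ω * t)) * GA ω h t| + |Real.exp (ω * t) * GB ω h t| := abs_add_le _ _
      _ ≤ Real.exp (-(ω * t)) * (C / ω * Real.exp (ω * t)) +
            Real.exp (ω * t) * (C / ω * Real.exp (-(ω * t))) := by
          rw [abs_mul, abs_mul, abs_of_pos e1, abs_of_pos e2]
          exact add_le_add (mul_le_mul_of_nonneg_left hA e1.le)
            (mul_le_mul_of_nonneg_left hB e2.le)
      _ = 2 * C / ω := by
          rw [show Real.exp (-(ω * t)) * (C / ω * Real.exp (ω * t))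
              = C / ω * (Real.exp (-(ω * t)) * Real.exp (ω * t)) by ring,
            show Real.exp (ω * t) * (C / ω * Real.exp (-(ω * t)))
              = C / ω * (Real.exp (ω * t) * Real.exp (-(ω * t))) by ring,
            ← Real.exp_add, ← Real.exp_add]
          simp
          ring
  unfold K
  rw [abs_mul, abs_of_pos (by positivity : (0:ℝ) < (2 * ω)⁻¹)]
  calc (2 * ω)⁻¹ * |Real.exp (-(ω * t)) * GA ω h t + Real.exp (ω * t) * GB ω h t|
      ≤ (2 * ω)⁻¹ * (2 * C / ω) := by
        exact mul_le_mul_of_nonneg_left key (by positivity)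
    _ = C / ω ^ 2 := by field_simp

lemma abs_K'_le (hω : 0 < ω) (hh : Continuous h) (hC : ∀ s, |h s| ≤ C) (t : ℝ) :
    |K' ω h t| ≤ C / ω := by
  have hA := abs_GA_le hω hh hC t
  have hB := abs_GB_le hω hh hC t
  have e1 : (0:ℝ) < Real.exp (-(ω * t)) := Real.exp_pos _
  have e2 : (0:ℝ) < Real.exp (ω * t) := Real.exp_pos _
  unfold K'
  rw [abs_mul, abs_of_pos (by positivity : (0:ℝ) < (2:ℝ)⁻¹)]
  have key : |-(Real.exp (-(ω * t)) * GA ω h t) + Real.exp (ω * t) * GB ω h t| ≤ 2 * C / ω := by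
    calc |-(Real.exp (-(ω * t)) * GA ω h t) + Real.exp (ω * t) * GB ω h t|
        ≤ |Real.exp (-(ω * t)) * GA ω h t| + |Real.exp (ω * t) * GB ω h t| := by
          simpa [abs_neg] using abs_add_le (-(Real.exp (-(ω * t)) * GA ω h t)) (Real.exp (ω * t) * GB ω h t)
      _ ≤ Real.exp (-(ω * t)) * (C / ω * Real.exp (ω * t)) +
            Real.exp (ω * t) * (C / ω * Real.exp (-(ω * t))) := by
          rw [abs_mul, abs_mul, abs_of_pos e1, abs_of_pos e2]
          exact add_le_add (mul_le_mul_of_nonneg_left hA e1.le)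
            (mul_le_mul_of_nonneg_left hB e2.le)
      _ = 2 * C / ω := by
          rw [show Real.exp (-(ω * t)) * (C / ω * Real.exp (ω * t))
              = C / ω * (Real.exp (-(ω * t)) * Real.exp (ω * t)) by ring,
            show Real.exp (ω * t) * (C / ω * Real.exp (-(ω * t)))
              = C / ω * (Real.exp (ω * t) * Real.exp (-(ω * t))) by ring,
            ← Real.exp_add, ← Real.exp_add]
          simp
          ring
  calc (2:ℝ)⁻¹ * |-(Real.exp (-(ω * t)) * GA ω h t) + Real.exp (ω * t) * GB ω h t|
      ≤ (2:ℝ)⁻¹ * (2 * C / ω) := mul_le_mul_of_nonneg_left key (by positivity)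
    _ = C / ω := by field_simp

lemma GA_sub (hω : 0 < ω) {h₁ h₂ : ℝ → ℝ} (hh₁ : Continuous h₁) (hh₂ : Continuous h₂)
    {C₁ C₂ : ℝ} (hC₁ : ∀ s, |h₁ s| ≤ C₁) (hC₂ : ∀ s, |h₂ s| ≤ C₂) (b : ℝ) :
    GA ω (fun s => h₁ s - h₂ s) b = GA ω h₁ b - GA ω h₂ b := by
  unfold GA
  rw [← MeasureTheory.integral_sub (intA hω hh₁ hC₁ b) (intA hω hh₂ hC₂ b)]
  congr 1
  ext s
  ring

lemma K_sub (hω : 0 < ω) {h₁ h₂ : ℝ → ℝ} (hh₁ : Continuous h₁) (hh₂ : Continuous h₂)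
    {C₁ C₂ : ℝ} (hC₁ : ∀ s, |h₁ s| ≤ C₁) (hC₂ : ∀ s, |h₂ s| ≤ C₂) (t : ℝ) :
    K ω h₁ t - K ω h₂ t = K ω (fun s => h₁ s - h₂ s) t := by
  have c1 : Continuous fun x : ℝ => h₁ (-x) := hh₁.comp continuous_neg
  have c2 : Continuous fun x : ℝ => h₂ (-x) := hh₂.comp continuous_neg
  have hGB : GB ω (fun s => h₁ s - h₂ s) t = GB ω h₁ t - GB ω h₂ t := by
    unfold GB
    exact GA_sub hω c1 c2 (fun s => hC₁ (-s)) (fun s => hC₂ (-s)) (-t)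
  unfold K
  rw [GA_sub hω hh₁ hh₂ hC₁ hC₂ t, hGB]
  ring


/-- A bounded solution (with bounded derivative) of `z'' = ω² z` on `ℝ` is zero. -/
lemma linear_uniq (hω : 0 < ω) {z z1 : ℝ → ℝ}
    (hz : ∀ t, HasDerivAt z (z1 t) t) (hz1 : ∀ t, HasDerivAt z1 (ω ^ 2 * z t) t)
    {C1 C2 : ℝ} (hb : ∀ t, |z t| ≤ C1) (hb1 : ∀ t, |z1 t| ≤ C2) : ∀ t, z t = 0 := by
  have const_of : ∀ (q : ℝ → ℝ), (∀ t, HasDerivAt q 0 t) → ∀ a b : ℝ, q a = q b := by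
    intro q hq a b
    exact is_const_of_deriv_eq_zero (fun x => (hq x).differentiableAt)
      (fun x => (hq x).deriv) a b
  -- step 1 : p := z1 + ω z satisfies p' = ω p, hence p e^{-ωt} is constant
  set p : ℝ → ℝ := fun t => z1 t + ω * z t with hp
  have hpder : ∀ t, HasDerivAt p (ω * p t) t := by
    intro t
    have := (hz1 t).add ((hz t).const_mul ω)
    have h2 : ω ^ 2 * z t + ω * z1 t = ω * p t := by simp only [hp]; ring
    rw [h2] at this
    exact this
  have hqder : ∀ t, HasDerivAt (fun t => p t * Real.exp (-(ω * t))) 0 t := by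
    intro t
    have he1 : HasDerivAt (fun t : ℝ => Real.exp (-(ω * t))) (-ω * Real.exp (-(ω * t))) t := by
      have h1 : HasDerivAt (fun t : ℝ => -(ω * t)) (-ω) t := by
        exact ((hasDerivAt_id' t).const_mul ω).neg.congr_deriv (by ring)
      exact ((Real.hasDerivAt_exp (-(ω * t))).comp t h1).congr_deriv (g' := -ω * Real.exp (-(ω * t))) (by ring)
    have := (hpder t).mul he1
    have h2 : ω * p t * Real.exp (-(ω * t)) + p t * (-ω * Real.exp (-(ω * t))) = 0 := by ring
    rw [h2] at this
    exact this
  have hpbound : ∀ t, |p t| ≤ C2 + ω * C1 := by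
    intro t
    calc |p t| ≤ |z1 t| + |ω * z t| := abs_add_le _ _
      _ ≤ C2 + ω * C1 := by
          rw [abs_mul, abs_of_pos hω]
          exact add_le_add (hb1 t) (mul_le_mul_of_nonneg_left (hb t) hω.le)
  -- the constant value must be 0
  have hp0 : ∀ t, p t = 0 := by
    intro t
    by_contra hne
    have hconst : ∀ b : ℝ, p t * Real.exp (-(ω * t)) = p b * Real.exp (-(ω * b)) :=
      fun b => const_of _ hqder t b
    set c : ℝ := p t * Real.exp (-(ω * t)) with hc
    have hcne : c ≠ 0 := mul_ne_zero hne (Real.exp_ne_zero _)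
    have hcabs : 0 < |c| := abs_pos.2 hcne
    set D : ℝ := C2 + ω * C1 with hD
    have hDpos : 0 ≤ D := le_trans (abs_nonneg _) (hpbound 0)
    -- choose b with exp (ω b) > (D+1)/|c|
    set b : ℝ := Real.log ((D + 1) / |c|) / ω with hbdef
    have hx : (0:ℝ) < (D + 1) / |c| := by positivity
    have hexp : Real.exp (ω * b) = (D + 1) / |c| := by
      rw [hbdef, mul_div_cancel₀ _ (ne_of_gt hω)]
      exact Real.exp_log hx
    have hpb : p b = c * Real.exp (ω * b) := by
      have h1 := hconst b
      rw [Real.exp_neg] at h1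
      field_simp at h1
      linarith
    have : |p b| = D + 1 := by
      rw [hpb, abs_mul, hexp, abs_of_pos hx]
      field_simp
    linarith [hpbound b, this.symm.le]
  -- step 2 : z' = -ω z, so z e^{ωt} is constant and z is bounded, so z = 0
  have hrder : ∀ t, HasDerivAt (fun t => z t * Real.exp (ω * t)) 0 t := by
    intro t
    have he2 : HasDerivAt (fun t : ℝ => Real.exp (ω * t)) (ω * Real.exp (ω * t)) t := by
      have h1 : HasDerivAt (fun t : ℝ => ω * t) ω t := by
        simpa using (hasDerivAt_id t).const_mul ω
      exact ((Real.hasDerivAt_exp (ω * t)).comp t h1).congr_deriv (by ring)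
    have := (hz t).mul he2
    have hz1t : z1 t = -(ω * z t) := by
      have := hp0 t
      simp only [hp] at this
      linarith
    rw [hz1t] at this
    have h2 : -(ω * z t) * Real.exp (ω * t) + z t * (ω * Real.exp (ω * t)) = 0 := by ring
    rw [h2] at this
    exact this
  intro t
  by_contra hne
  have hconst : ∀ b : ℝ, z t * Real.exp (ω * t) = z b * Real.exp (ω * b) :=
    fun b => const_of _ hrder t b
  set c : ℝ := z t * Real.exp (ω * t) with hc
  have hcne : c ≠ 0 := mul_ne_zero hne (Real.exp_ne_zero _)
  have hcabs : 0 < |c| := abs_pos.2 hcne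
  have hC1pos : 0 ≤ C1 := le_trans (abs_nonneg _) (hb 0)
  set b : ℝ := -(Real.log ((C1 + 1) / |c|) / ω) with hbdef
  have hx : (0:ℝ) < (C1 + 1) / |c| := by positivity
  have hexp : Real.exp (-(ω * b)) = (C1 + 1) / |c| := by
    rw [hbdef]
    rw [show -(ω * -(Real.log ((C1 + 1) / |c|) / ω)) = ω * (Real.log ((C1 + 1) / |c|) / ω) by ring]
    rw [mul_div_cancel₀ _ (ne_of_gt hω)]
    exact Real.exp_log hx
  have hzb : z b = c * Real.exp (-(ω * b)) := by
    have := hconst b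
    have hEne : Real.exp (ω * b) ≠ 0 := Real.exp_ne_zero _
    rw [Real.exp_neg]
    field_simp
    linarith [this]
  have : |z b| = C1 + 1 := by
    rw [hzb, abs_mul, hexp, abs_of_pos hx]
    field_simp
  linarith [hb b, this.symm.le]

/-- Any bounded solution with bounded derivative of `-w'' + ω² w = h` equals `K ω h`. -/
lemma eq_K (hω : 0 < ω) (hh : Continuous h) (hC : ∀ s, |h s| ≤ C)
    {w w1 : ℝ → ℝ} {Cw Cw1 : ℝ} (hbw : ∀ t, |w t| ≤ Cw) (hbw1 : ∀ t, |w1 t| ≤ Cw1)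
    (hw : ∀ t, HasDerivAt w (w1 t) t)
    (hw1 : ∀ t, HasDerivAt w1 (ω ^ 2 * w t - h t) t) :
    ∀ t, w t = K ω h t := by
  have hz : ∀ t, HasDerivAt (fun t => w t - K ω h t) (w1 t - K' ω h t) t :=
    fun t => (hw t).sub (hasDerivAt_K hω hh hC t)
  have hz1 : ∀ t, HasDerivAt (fun t => w1 t - K' ω h t)
      (ω ^ 2 * (w t - K ω h t)) t := by
    intro t
    have := (hw1 t).sub (hasDerivAt_K' hω hh hC t)
    have h2 : ω ^ 2 * w t - h t - (ω ^ 2 * K ω h t - h t) = ω ^ 2 * (w t - K ω h t) := by ring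
    rw [h2] at this
    exact this
  have hbz : ∀ t, |w t - K ω h t| ≤ Cw + C / ω ^ 2 := by
    intro t
    calc |w t - K ω h t| ≤ |w t| + |K ω h t| := abs_sub _ _
      _ ≤ Cw + C / ω ^ 2 := add_le_add (hbw t) (abs_K_le hω hh hC t)
  have hbz1 : ∀ t, |w1 t - K' ω h t| ≤ Cw1 + C / ω := by
    intro t
    calc |w1 t - K' ω h t| ≤ |w1 t| + |K' ω h t| := abs_sub _ _
      _ ≤ Cw1 + C / ω := add_le_add (hbw1 t) (abs_K'_le hω hh hC t)
  intro t
  have := linear_uniq hω hz hz1 hbz hbz1 t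
  linarith [this]


lemma bdd_of_periodic {v : ℝ → ℝ} {P : ℝ} (hv : Continuous v) (hper : Function.Periodic v P)
    (hP : 0 < P) : ∃ C, ∀ t, |v t| ≤ C := by
  obtain ⟨C, hC⟩ := (isCompact_Icc : IsCompact (Icc (0:ℝ) P)).exists_bound_of_continuousOn
    hv.continuousOn
  refine ⟨C, fun t => ?_⟩
  obtain ⟨y, hy, hyv⟩ := hper.exists_mem_Ico₀ hP t
  rw [hyv]
  simpa using hC y ⟨hy.1, hy.2.le⟩

section FixedPoint

variable {ω L Cf : ℝ} {φ f : ℝ → ℝ}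

/-- The nonlinearity associated to a bounded continuous `u`. -/
def hfn (φ f : ℝ → ℝ) (u : BoundedContinuousFunction ℝ ℝ) : ℝ → ℝ := fun t => f t + φ (u t)

lemma hfn_cont (hφcont : Continuous φ) (hf : Continuous f)
    (u : BoundedContinuousFunction ℝ ℝ) : Continuous (hfn φ f u) :=
  hf.add (hφcont.comp u.continuous)

lemma abs_φ_le (hφlip : ∀ x y, |φ x - φ y| ≤ L * |x - y|) (x : ℝ) :
    |φ x| ≤ L * |x| + |φ 0| := by
  calc |φ x| = |(φ x - φ 0) + φ 0| := by ring_nf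
    _ ≤ |φ x - φ 0| + |φ 0| := abs_add_le _ _
    _ ≤ L * |x| + |φ 0| := by
        have := hφlip x 0
        simp only [sub_zero] at this
        linarith

lemma hfn_bound (hφlip : ∀ x y, |φ x - φ y| ≤ L * |x - y|) (hCf : ∀ t, |f t| ≤ Cf)
    (hL : 0 ≤ L) (u : BoundedContinuousFunction ℝ ℝ) (t : ℝ) :
    |hfn φ f u t| ≤ Cf + (L * ‖u‖ + |φ 0|) := by
  have h1 : |φ (u t)| ≤ L * ‖u‖ + |φ 0| := by
    have h2 := abs_φ_le hφlip (u t)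
    have h3 : ‖u t‖ ≤ ‖u‖ := BoundedContinuousFunction.norm_coe_le_norm u t
    rw [Real.norm_eq_abs] at h3
    nlinarith
  calc |hfn φ f u t| ≤ |f t| + |φ (u t)| := abs_add_le _ _
    _ ≤ Cf + (L * ‖u‖ + |φ 0|) := add_le_add (hCf t) h1

/-- The fixed point map `u ↦ K ω (f + φ ∘ u)`. -/
noncomputable def Tmap (ω : ℝ) (hω : 0 < ω) (L Cf : ℝ) (φ f : ℝ → ℝ)
    (hφcont : Continuous φ) (hφlip : ∀ x y, |φ x - φ y| ≤ L * |x - y|)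
    (hf : Continuous f) (hCf : ∀ t, |f t| ≤ Cf) (hL : 0 ≤ L) :
    BoundedContinuousFunction ℝ ℝ → BoundedContinuousFunction ℝ ℝ := fun u =>
  BoundedContinuousFunction.ofNormedAddCommGroup (fun t => K ω (hfn φ f u) t)
    (continuous_iff_continuousAt.2 fun t =>
      (hasDerivAt_K hω (hfn_cont hφcont hf u) (hfn_bound hφlip hCf hL u) t).continuousAt)
    ((Cf + (L * ‖u‖ + |φ 0|)) / ω ^ 2)
    (fun t => by
      rw [Real.norm_eq_abs]
      exact abs_K_le hω (hfn_cont hφcont hf u) (hfn_bound hφlip hCf hL u) t)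

lemma Tmap_apply (ω : ℝ) (hω : 0 < ω) (L Cf : ℝ) (φ f : ℝ → ℝ)
    (hφcont : Continuous φ) (hφlip : ∀ x y, |φ x - φ y| ≤ L * |x - y|)
    (hf : Continuous f) (hCf : ∀ t, |f t| ≤ Cf) (hL : 0 ≤ L)
    (u : BoundedContinuousFunction ℝ ℝ) (t : ℝ) :
    (Tmap ω hω L Cf φ f hφcont hφlip hf hCf hL u) t = K ω (hfn φ f u) t := rfl

end FixedPoint


/-- Main fixed-point theorem: existence of a `c`-periodic `C²` solution of
`u'' = ω² u - (f + φ ∘ u)`, unique among bounded solutions with bounded derivative. -/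
theorem main {ω L Cf : ℝ} (hω : 0 < ω) (hL : 0 < L) (hLω : L < ω ^ 2)
    {φ : ℝ → ℝ} (hφcont : Continuous φ) (hφlip : ∀ x y, |φ x - φ y| ≤ L * |x - y|)
    {f : ℝ → ℝ} (hf : Continuous f) (hCf : ∀ t : ℝ, |f t| ≤ Cf)
    {c : ℝ} (hfper : Function.Periodic f c) :
    ∃ u : ℝ → ℝ, (ContDiff ℝ 2 u ∧ Function.Periodic u c ∧
        ∀ t, deriv (deriv u) t = ω ^ 2 * u t - (f t + φ (u t))) ∧
      ∀ (w w1 : ℝ → ℝ) (Cw Cw1 : ℝ), (∀ t, |w t| ≤ Cw) → (∀ t, |w1 t| ≤ Cw1) →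
        (∀ t, HasDerivAt w (w1 t) t) →
        (∀ t, HasDerivAt w1 (ω ^ 2 * w t - (f t + φ (w t))) t) → ∀ t, w t = u t := by
  classical
  set T := Tmap ω hω L Cf φ f hφcont hφlip hf hCf hL.le with hTdef
  -- `T` is a contraction with ratio `L / ω²`
  set r : NNReal := ⟨L / ω ^ 2, by positivity⟩ with hrdef
  have hr1 : r < 1 := by
    rw [← NNReal.coe_lt_coe]
    exact (div_lt_one (by positivity)).2 hLω
  have hlip : LipschitzWith r T := by
    apply LipschitzWith.of_dist_le_mul
    intro u v
    have hApt : ∀ t : ℝ, dist (T u t) (T v t) ≤ (L / ω ^ 2) * dist u v := by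
      intro t
      rw [Real.dist_eq, Tmap_apply, Tmap_apply]
      have hsub := K_sub hω (hfn_cont hφcont hf u) (hfn_cont hφcont hf v)
        (hfn_bound hφlip hCf hL.le u) (hfn_bound hφlip hCf hL.le v) t
      rw [hsub]
      have hdiffcont : Continuous fun s => hfn φ f u s - hfn φ f v s :=
        (hfn_cont hφcont hf u).sub (hfn_cont hφcont hf v)
      have hdiffbd : ∀ s, |hfn φ f u s - hfn φ f v s| ≤ L * dist u v := by
        intro s
        have h1 : hfn φ f u s - hfn φ f v s = φ (u s) - φ (v s) := by
          simp only [hfn]; ring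
        rw [h1]
        calc |φ (u s) - φ (v s)| ≤ L * |u s - v s| := hφlip _ _
          _ ≤ L * dist u v := by
              have := BoundedContinuousFunction.dist_coe_le_dist (f := u) (g := v) s
              rw [Real.dist_eq] at this
              exact mul_le_mul_of_nonneg_left this hL.le
      have := abs_K_le hω hdiffcont hdiffbd t
      calc |K ω (fun s => hfn φ f u s - hfn φ f v s) t| ≤ L * dist u v / ω ^ 2 := this
        _ = L / ω ^ 2 * dist u v := by ring
    calc dist (T u) (T v) ≤ (L / ω ^ 2) * dist u v := by
          apply (BoundedContinuousFunction.dist_le (by positivity)).2 hApt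
      _ = (r : ℝ) * dist u v := rfl
  have hcontr : ContractingWith r T := ⟨hr1, hlip⟩
  set u₀ : BoundedContinuousFunction ℝ ℝ := ContractingWith.fixedPoint T hcontr with hu₀def
  have hfix : T u₀ = u₀ := hcontr.fixedPoint_isFixedPt
  -- pointwise: u₀ = K ω h₀ where h₀ = f + φ ∘ u₀
  have hpt : ∀ t : ℝ, u₀ t = K ω (hfn φ f u₀) t := by
    intro t
    conv_lhs => rw [← hfix]
    rfl
  have hcont₀ : Continuous (hfn φ f u₀) := hfn_cont hφcont hf u₀
  have hbd₀ : ∀ t, |hfn φ f u₀ t| ≤ Cf + (L * ‖u₀‖ + |φ 0|) := hfn_bound hφlip hCf hL.le u₀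
  -- derivative structure of u₀
  have d1 : ∀ t, HasDerivAt (fun t => u₀ t) (K' ω (hfn φ f u₀) t) t := by
    intro t
    have := hasDerivAt_K hω hcont₀ hbd₀ t
    exact this.congr_of_eventuallyEq (Filter.Eventually.of_forall fun b => (hpt b))
  have d2 : ∀ t, HasDerivAt (K' ω (hfn φ f u₀))
      (ω ^ 2 * u₀ t - hfn φ f u₀ t) t := by
    intro t
    have := hasDerivAt_K' hω hcont₀ hbd₀ t
    rw [← hpt t] at this
    exact this
  -- uniqueness among bounded solutions
  have huniq : ∀ (w w1 : ℝ → ℝ) (Cw Cw1 : ℝ), (∀ t, |w t| ≤ Cw) → (∀ t, |w1 t| ≤ Cw1) →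
      (∀ t, HasDerivAt w (w1 t) t) →
      (∀ t, HasDerivAt w1 (ω ^ 2 * w t - (f t + φ (w t))) t) → ∀ t, w t = u₀ t := by
    intro w w1 Cw Cw1 hbw hbw1 hw hw1
    -- `w` as a bounded continuous function
    set W : BoundedContinuousFunction ℝ ℝ :=
      BoundedContinuousFunction.ofNormedAddCommGroup w
        (continuous_iff_continuousAt.2 fun t => (hw t).continuousAt) Cw
        (fun t => by rw [Real.norm_eq_abs]; exact hbw t) with hWdef
    have hWt : ∀ t, W t = w t := fun t => rfl
    have hWcont : Continuous (hfn φ f W) := hfn_cont hφcont hf W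
    have hWbd : ∀ t, |hfn φ f W t| ≤ Cf + (L * ‖W‖ + |φ 0|) := hfn_bound hφlip hCf hL.le W
    have hwK : ∀ t, w t = K ω (hfn φ f W) t := by
      apply eq_K hω hWcont hWbd hbw hbw1 hw
      intro t
      have := hw1 t
      have h2 : ω ^ 2 * w t - (f t + φ (w t)) = ω ^ 2 * w t - hfn φ f W t := by
        simp only [hfn, hWt]
      rw [h2] at this
      exact this
    have hWfix : T W = W := by
      ext t
      rw [Tmap_apply]
      exact (hwK t).symm
    have : W = u₀ := hcontr.fixedPoint_unique hWfix
    intro t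
    rw [← hWt t, this]
  -- periodicity : the translate of `u₀` is also a fixed point
  have hper : Function.Periodic (fun t => u₀ t) c := by
    intro t
    have hKb := abs_K_le hω hcont₀ hbd₀
    have hK'b := abs_K'_le hω hcont₀ hbd₀
    have hw : ∀ x, HasDerivAt (fun y => u₀ (y + c)) (K' ω (hfn φ f u₀) (x + c)) x := by
      intro x
      exact (d1 (x + c)).comp_add_const x c
    have hw1 : ∀ x, HasDerivAt (fun y => K' ω (hfn φ f u₀) (y + c))
        (ω ^ 2 * u₀ (x + c) - (f x + φ (u₀ (x + c)))) x := by
      intro x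
      have := (d2 (x + c)).comp_add_const x c
      have h2 : ω ^ 2 * u₀ (x + c) - hfn φ f u₀ (x + c)
          = ω ^ 2 * u₀ (x + c) - (f x + φ (u₀ (x + c))) := by
        simp only [hfn, hfper x]
      rw [h2] at this
      exact this
    have := huniq (fun y => u₀ (y + c)) (fun y => K' ω (hfn φ f u₀) (y + c))
      ((Cf + (L * ‖u₀‖ + |φ 0|)) / ω ^ 2) ((Cf + (L * ‖u₀‖ + |φ 0|)) / ω)
      (fun x => by
        have h3 := abs_K_le hω hcont₀ hbd₀ (x + c)
        rw [← hpt (x + c)] at h3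
        exact h3)
      (fun x => hK'b (x + c)) hw hw1 t
    exact this
  have hd1 : deriv (fun t => u₀ t) = K' ω (hfn φ f u₀) := funext fun t => (d1 t).deriv
  have hd2 : deriv (K' ω (hfn φ f u₀)) = fun t => ω ^ 2 * u₀ t - hfn φ f u₀ t :=
    funext fun t => (d2 t).deriv
  have hc2 : Continuous fun t => ω ^ 2 * u₀ t - hfn φ f u₀ t :=
    (continuous_const.mul u₀.continuous).sub hcont₀
  refine ⟨fun t => u₀ t, ⟨?_, hper, ?_⟩, huniq⟩
  · have h2 : ContDiff ℝ ((1 : WithTop ℕ∞) + 1) (fun t => u₀ t) := by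
      rw [contDiff_succ_iff_deriv]
      refine ⟨fun t => (d1 t).differentiableAt, by simp, ?_⟩
      rw [hd1, contDiff_one_iff_deriv]
      exact ⟨fun t => (d2 t).differentiableAt, by rw [hd2]; exact hc2⟩
    have h3 : ((1 : WithTop ℕ∞) + 1) = 2 := by norm_num
    rw [h3] at h2
    exact h2
  · intro t
    rw [hd1, (d2 t).deriv]
    simp only [hfn]

end

end PoSym

/-- Preservation of symmetry with uniqueness: if `g'` is squeezed strictly between
consecutive eigenvalues `i²` and `(i+1)²`, and `f` is continuous and `2π/s`-periodic,
then the problem `-u'' + g(u) = f` has exactly one `C²` `2π`-periodic solution, and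
this unique solution is `2π/s`-periodic. -/
theorem preservation_of_symmetry_unique
    (g : ℝ → ℝ) (hg : ContDiff ℝ 1 g)
    (i : ℕ) (hi : 1 ≤ i)
    (hlow : ∀ x : ℝ, (i : ℝ) ^ 2 < deriv g x)
    (hhigh : ∀ x : ℝ, deriv g x < ((i : ℝ) + 1) ^ 2)
    (s : ℕ) (hs : 0 < s)
    (f : ℝ → ℝ) (hf : Continuous f)
    (hfper : Function.Periodic f (2 * π / s)) :
    (∃! u : ℝ → ℝ, ContDiff ℝ 2 u ∧ Function.Periodic u (2 * π) ∧
        ∀ t : ℝ, -(deriv (deriv u) t) + g (u t) = f t) ∧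
    (∀ u : ℝ → ℝ, ContDiff ℝ 2 u → Function.Periodic u (2 * π) →
        (∀ t : ℝ, -(deriv (deriv u) t) + g (u t) = f t) →
        Function.Periodic u (2 * π / s)) := by
  have hπ : 0 < π := Real.pi_pos
  have hsR : (0:ℝ) < (s:ℝ) := by exact_mod_cast hs
  have hc : 0 < 2 * π / s := by positivity
  have hgdiff : Differentiable ℝ g := hg.differentiable one_ne_zero
  set ω : ℝ := (i : ℝ) + 1 with hω_def
  have hi1 : (1:ℝ) ≤ (i:ℝ) := by exact_mod_cast hi
  have hω : 0 < ω := by positivity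
  set L : ℝ := ω ^ 2 - (i:ℝ) ^ 2 with hL_def
  have hLpos : 0 < L := by rw [hL_def, hω_def]; nlinarith
  have hLω : L < ω ^ 2 := by rw [hL_def]; nlinarith
  set φ : ℝ → ℝ := fun x => ω ^ 2 * x - g x with hφ_def
  have hφcont : Continuous φ := (continuous_const.mul continuous_id).sub hgdiff.continuous
  have hφlip : ∀ x y, |φ x - φ y| ≤ L * |x - y| := by
    have key : ∀ x y, x < y → |φ y - φ x| ≤ L * |y - x| := by
      intro x y hxy
      have hder : ∀ z ∈ Set.Ioo x y, HasDerivAt φ (ω ^ 2 - deriv g z) z := by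
        intro z _
        have h1 : HasDerivAt (fun w : ℝ => ω ^ 2 * w) (ω ^ 2) z := by
          simpa using (hasDerivAt_id z).const_mul (ω ^ 2)
        exact h1.sub (hgdiff z).hasDerivAt
      obtain ⟨z, hz, hz'⟩ := exists_hasDerivAt_eq_slope φ (fun z => ω ^ 2 - deriv g z) hxy
        hφcont.continuousOn hder
      have hyx : y - x ≠ 0 := by linarith
      have h2 : φ y - φ x = (ω ^ 2 - deriv g z) * (y - x) := by
        rw [hz']
        field_simp
      rw [h2, abs_mul]
      have h3 : |ω ^ 2 - deriv g z| ≤ L :=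
        abs_le.2 ⟨by nlinarith [hhigh z, hlow z], by nlinarith [hhigh z, hlow z]⟩
      exact mul_le_mul_of_nonneg_right h3 (abs_nonneg _)
    intro x y
    rcases lt_trichotomy x y with h | h | h
    · rw [abs_sub_comm (φ x), abs_sub_comm x]
      exact key x y h
    · simp [h]
    · exact key y x h
  obtain ⟨Cf, hCf⟩ := PoSym.bdd_of_periodic hf hfper hc
  obtain ⟨u, ⟨hu2, huper, hueq⟩, huniq⟩ :=
    PoSym.main hω hLpos hLω hφcont hφlip hf hCf hfper
  have hueq' : ∀ t : ℝ, -(deriv (deriv u) t) + g (u t) = f t := by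
    intro t
    rw [hueq t]
    simp only [hφ_def]
    ring
  -- any `C²` `2π`-periodic solution is equal to `u`
  have hsol_eq : ∀ v : ℝ → ℝ, ContDiff ℝ 2 v → Function.Periodic v (2 * π) →
      (∀ t, -(deriv (deriv v) t) + g (v t) = f t) → ∀ t, v t = u t := by
    intro v hv hvper hveq
    have h2π : (0:ℝ) < 2 * π := by positivity
    have h21 : ContDiff ℝ ((1 : WithTop ℕ∞) + 1) v := by
      have h3 : ((1 : WithTop ℕ∞) + 1) = 2 := by norm_num
      rw [h3]; exact hv
    obtain ⟨hdiffv, -, hv1⟩ := contDiff_succ_iff_deriv.1 h21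
    have hvcont : Continuous v := hdiffv.continuous
    obtain ⟨Cv, hCv⟩ := PoSym.bdd_of_periodic hvcont hvper h2π
    have hv1diff : Differentiable ℝ (deriv v) := hv1.differentiable one_ne_zero
    have hvdper : Function.Periodic (deriv v) (2 * π) := by
      intro t
      have h1 : (fun x => v (x + 2 * π)) = v := funext fun x => hvper x
      calc deriv v (t + 2 * π) = deriv (fun x => v (x + 2 * π)) t :=
            (deriv_comp_add_const v (2 * π) t).symm
        _ = deriv v t := by rw [h1]
    obtain ⟨Cv1, hCv1⟩ := PoSym.bdd_of_periodic hv1.continuous hvdper h2π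
    have hw : ∀ t, HasDerivAt v (deriv v t) t := fun t => (hdiffv t).hasDerivAt
    have hw1 : ∀ t, HasDerivAt (deriv v) (ω ^ 2 * v t - (f t + φ (v t))) t := by
      intro t
      have h1 : HasDerivAt (deriv v) (deriv (deriv v) t) t := (hv1diff t).hasDerivAt
      have h3 : ω ^ 2 * v t - (f t + φ (v t)) = g (v t) - f t := by
        simp only [hφ_def]; ring
      have h4 : deriv (deriv v) t = g (v t) - f t := by linarith [hveq t]
      rw [h3, ← h4]
      exact h1
    exact huniq v (deriv v) Cv Cv1 hCv hCv1 hw hw1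
  have hu2π : Function.Periodic u (2 * π) := by
    have h1 := huper.nat_mul s
    have h2 : (s:ℝ) * (2 * π / s) = 2 * π := by field_simp
    rwa [h2] at h1
  constructor
  · refine ⟨u, ⟨hu2, hu2π, hueq'⟩, ?_⟩
    intro v hv
    exact funext (hsol_eq v hv.1 hv.2.1 hv.2.2)
  · intro v hv2 hvper hveq
    have h1 := hsol_eq v hv2 hvper hveq
    intro t
    rw [h1 (t + 2 * π / s), h1 t]
    exact huper t
end

section
/- Let H be a real Hilbert space, let L : H → H be a bounded self-adjoint linear operator, and let λ < μ be real numbers such that λ and μ belong to the spectrum of L while the open interval (λ, μ) is contained in the resolvent set of L (i.e. (λ, μ) ∩ σ(L) = ∅). Let N : H → H be a map that is differentiable at every point, with derivative N'(x) a bounded self-adjoint operator for each x ∈ H, and suppose there are real numbers p, q with λ < q ≤ p < μ such that q‖h‖² ≤ ⟨N'(x)h, h⟩ ≤ p‖h‖² for all x, h ∈ H. Then L − N is a bijection of H onto H, and its inverse (L − N)⁻¹ : H → H is Lipschitz continuous. -/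
open scoped InnerProductSpace NNReal

section Aux

variable {H : Type*} [NormedAddCommGroup H] [InnerProductSpace ℝ H] [CompleteSpace H]

/-- A self-adjoint operator whose quadratic form is bounded by `k ‖h‖²` in absolute
value satisfies `‖T x‖ ≤ k ‖x‖` (polarization argument). -/
lemma selfadjoint_pointwise_norm_le (T : H →L[ℝ] H) (hT : IsSelfAdjoint T)
    (k : ℝ) (hk0 : 0 ≤ k) (hk : ∀ h : H, |⟪T h, h⟫_ℝ| ≤ k * ‖h‖ ^ 2) (x : H) :
    ‖T x‖ ≤ k * ‖x‖ := by
  have hsym' : ∀ a b : H, ⟪T a, b⟫_ℝ = ⟪a, T b⟫_ℝ := fun a b => hT.isSymmetric a b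
  have key : ∀ a b : H, ⟪T (a + b), a + b⟫_ℝ - ⟪T (a - b), a - b⟫_ℝ = 4 * ⟪T a, b⟫_ℝ := by
    intro a b
    have hs : ⟪T b, a⟫_ℝ = ⟪T a, b⟫_ℝ := by
      rw [hsym' b a]; exact real_inner_comm (T a) b
    simp only [map_add, map_sub, inner_add_left, inner_add_right, inner_sub_left,
      inner_sub_right]
    linarith
  rcases eq_or_ne (T x) 0 with h0 | h0
  · rw [h0, norm_zero]; positivity
  have hx : x ≠ 0 := by rintro rfl; simp at h0
  have hxpos : (0:ℝ) < ‖x‖ := norm_pos_iff.mpr hx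
  have hTxpos : (0:ℝ) < ‖T x‖ := norm_pos_iff.mpr h0
  set y : H := (‖x‖ / ‖T x‖) • T x with hy
  have hyn : ‖y‖ = ‖x‖ := by
    rw [hy, norm_smul, Real.norm_eq_abs, abs_of_nonneg (by positivity)]
    field_simp
  have hin : ⟪T x, y⟫_ℝ = ‖x‖ * ‖T x‖ := by
    rw [hy, real_inner_smul_right, real_inner_self_eq_norm_sq]
    field_simp
  have hpar : ‖x + y‖ * ‖x + y‖ + ‖x - y‖ * ‖x - y‖ = 2 * (‖x‖ * ‖x‖ + ‖y‖ * ‖y‖) :=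
    by linear_combination parallelogram_law_with_norm ℝ x y
  have h1' : ⟪T (x + y), x + y⟫_ℝ ≤ k * ‖x + y‖ ^ 2 := (abs_le.mp (hk (x + y))).2
  have h2' : -(k * ‖x - y‖ ^ 2) ≤ ⟪T (x - y), x - y⟫_ℝ := (abs_le.mp (hk (x - y))).1
  have hkey := key x y
  have e1 : ‖x + y‖ ^ 2 = ‖x + y‖ * ‖x + y‖ := sq ‖x + y‖
  have e2 : ‖x - y‖ ^ 2 = ‖x - y‖ * ‖x - y‖ := sq ‖x - y‖
  rw [hyn] at hpar
  rw [sq] at h1' h2'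
  have hpark : k * (‖x + y‖ * ‖x + y‖ + ‖x - y‖ * ‖x - y‖)
      = k * (2 * (‖x‖ * ‖x‖ + ‖x‖ * ‖x‖)) := by rw [hpar]
  have hstep : 4 * (‖x‖ * ‖T x‖) ≤ 4 * (k * (‖x‖ * ‖x‖)) := by
    nlinarith [h1', h2', hkey, hin, hpark]
  nlinarith [hstep, hxpos]

/-- If the spectrum of a self-adjoint operator avoids `(-d, d)`, the operator is
bounded below by `d`. -/
lemma selfadjoint_coercive_of_gap (A : H →L[ℝ] H) (hA : IsSelfAdjoint A)
    (d : ℝ) (hd : 0 ≤ d)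
    (hgap : ∀ t : ℝ, |t| < d → IsUnit (algebraMap ℝ (H →L[ℝ] H) t - A)) :
    ∀ h : H, d * ‖h‖ ≤ ‖A h‖ := by
  rcases subsingleton_or_nontrivial H with hsub | hnt
  · intro h
    have : h = 0 := Subsingleton.elim h 0
    simp [this]
  have hsym' : ∀ a b : H, ⟪A a, b⟫_ℝ = ⟪a, A b⟫_ℝ := fun a b => hA.isSymmetric a b
  set S : Set ℝ := (fun h : H => ‖A h‖ ^ 2) '' {h : H | ‖h‖ = 1} with hS
  obtain ⟨e0, he0⟩ := exists_ne (0 : H)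
  have he1 : ‖(‖e0‖⁻¹ • e0 : H)‖ = 1 := by
    have : (0:ℝ) < ‖e0‖ := norm_pos_iff.mpr he0
    rw [norm_smul, Real.norm_eq_abs, abs_of_nonneg (by positivity)]
    field_simp
  have hSne : S.Nonempty := ⟨_, ⟨_, he1, rfl⟩⟩
  have hSbd : BddBelow S := ⟨0, by rintro r ⟨h, -, rfl⟩; positivity⟩
  set m : ℝ := sInf S with hm
  have hm0 : 0 ≤ m := le_csInf hSne (by rintro r ⟨h, -, rfl⟩; positivity)
  have hlow : ∀ h : H, m * ‖h‖ ^ 2 ≤ ‖A h‖ ^ 2 := by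
    intro h
    rcases eq_or_ne h 0 with rfl | hh
    · simp
    have hhpos : (0:ℝ) < ‖h‖ := norm_pos_iff.mpr hh
    have hh1 : ‖(‖h‖⁻¹ • h : H)‖ = 1 := by
      rw [norm_smul, Real.norm_eq_abs, abs_of_nonneg (by positivity)]
      field_simp
    have hle : m ≤ ‖A (‖h‖⁻¹ • h)‖ ^ 2 := csInf_le hSbd ⟨_, hh1, rfl⟩
    rw [map_smul, norm_smul, Real.norm_eq_abs, abs_of_nonneg (by positivity : (0:ℝ) ≤ ‖h‖⁻¹)]
      at hle
    have h1 : m ≤ (‖h‖⁻¹) ^ 2 * ‖A h‖ ^ 2 := by nlinarith [hle]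
    have h2 : m * ‖h‖ ^ 2 ≤ (‖h‖⁻¹) ^ 2 * ‖A h‖ ^ 2 * ‖h‖ ^ 2 := by nlinarith [sq_nonneg ‖h‖]
    calc m * ‖h‖ ^ 2 ≤ (‖h‖⁻¹) ^ 2 * ‖A h‖ ^ 2 * ‖h‖ ^ 2 := h2
      _ = ‖A h‖ ^ 2 := by field_simp
  set R : H →L[ℝ] H := A * A - algebraMap ℝ (H →L[ℝ] H) m with hR
  have hRapp : ∀ x : H, R x = A (A x) - m • x := by
    intro x
    simp [hR, ContinuousLinearMap.sub_apply, ContinuousLinearMap.mul_apply,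
      Algebra.algebraMap_eq_smul_one, ContinuousLinearMap.smul_apply,
      ContinuousLinearMap.one_apply]
  have hinner : ∀ x : H, ⟪R x, x⟫_ℝ = ‖A x‖ ^ 2 - m * ‖x‖ ^ 2 := by
    intro x
    rw [hRapp, inner_sub_left, real_inner_smul_left, hsym' (A x) x,
      real_inner_self_eq_norm_sq, real_inner_self_eq_norm_sq]
  have hRpos : ∀ x : H, 0 ≤ ⟪R x, x⟫_ℝ := by
    intro x; rw [hinner]; linarith [hlow x]
  have hRsym : ∀ x z : H, ⟪R x, z⟫_ℝ = ⟪x, R z⟫_ℝ := by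
    intro x z
    rw [hRapp, hRapp, inner_sub_left, inner_sub_right, real_inner_smul_left,
      real_inner_smul_right, hsym' (A x) z, hsym' x (A z)]
  have hCS : ∀ x : H, ‖R x‖ ^ 2 ≤ ‖R‖ * ⟪R x, x⟫_ℝ := by
    intro x
    rcases eq_or_ne (R x) 0 with h0 | h0
    · have hz : ‖R x‖ ^ 2 = 0 := by rw [h0, norm_zero]; norm_num
      rw [hz]
      exact mul_nonneg (norm_nonneg _) (hRpos x)
    have hquad : ∀ t : ℝ, 0 ≤ ⟪R (R x), R x⟫_ℝ * (t * t) + (2 * ⟪R x, R x⟫_ℝ) * t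
        + ⟪R x, x⟫_ℝ := by
      intro t
      have h := hRpos (x + t • R x)
      have hexp : ⟪R (x + t • R x), x + t • R x⟫_ℝ
          = ⟪R (R x), R x⟫_ℝ * (t * t) + (2 * ⟪R x, R x⟫_ℝ) * t + ⟪R x, x⟫_ℝ := by
        rw [map_add, map_smul]
        simp only [inner_add_left, inner_add_right, real_inner_smul_left,
          real_inner_smul_right]
        have h1 : ⟪R (R x), x⟫_ℝ = ⟪R x, R x⟫_ℝ := hRsym (R x) x
        rw [h1]; ring
      linarith [hexp ▸ h]
    have hdisc := discrim_le_zero hquad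
    rw [discrim] at hdisc
    have hb : ⟪R (R x), R x⟫_ℝ ≤ ‖R‖ * ‖R x‖ ^ 2 := by
      calc ⟪R (R x), R x⟫_ℝ ≤ ‖R (R x)‖ * ‖R x‖ := real_inner_le_norm _ _
        _ ≤ (‖R‖ * ‖R x‖) * ‖R x‖ := by
            have := R.le_opNorm (R x)
            nlinarith [norm_nonneg (R x)]
        _ = ‖R‖ * ‖R x‖ ^ 2 := by ring
    have hRxx : ⟪R x, R x⟫_ℝ = ‖R x‖ ^ 2 := real_inner_self_eq_norm_sq _
    have hpos : (0:ℝ) < ‖R x‖ := norm_pos_iff.mpr h0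
    have h4 : ⟪R (R x), R x⟫_ℝ * ⟪R x, x⟫_ℝ ≤ (‖R‖ * ‖R x‖ ^ 2) * ⟪R x, x⟫_ℝ :=
      mul_le_mul_of_nonneg_right hb (hRpos x)
    nlinarith [hdisc, hRxx, h4, mul_pos hpos hpos]
  have hnotunit : ¬ IsUnit R := by
    rintro ⟨u, hu⟩
    set C := ‖(↑u⁻¹ : H →L[ℝ] H)‖ with hC
    have hCpos : 0 ≤ C := norm_nonneg _
    have hinv : ∀ x : H, ‖x‖ ≤ C * ‖R x‖ := by
      intro x
      have hux : (↑u⁻¹ : H →L[ℝ] H) (R x) = x := by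
        rw [← hu]
        calc (↑u⁻¹ : H →L[ℝ] H) ((↑u : H →L[ℝ] H) x)
            = ((↑u⁻¹ * ↑u : H →L[ℝ] H)) x := rfl
          _ = x := by rw [u.inv_mul]; rfl
      calc ‖x‖ = ‖(↑u⁻¹ : H →L[ℝ] H) (R x)‖ := by rw [hux]
        _ ≤ C * ‖R x‖ := ContinuousLinearMap.le_opNorm _ _
    set ε : ℝ := 1 / (2 * (C ^ 2 * ‖R‖ + 1)) with hε
    have hεpos : 0 < ε := by positivity
    have hεeq : ε * (2 * (C ^ 2 * ‖R‖ + 1)) = 1 := by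
      rw [hε]; field_simp
    obtain ⟨r, hrS, hrlt⟩ := exists_lt_of_csInf_lt hSne (by linarith : sInf S < m + ε)
    obtain ⟨h1, hh1, rfl⟩ := hrS
    have hh1' : ‖h1‖ = 1 := hh1
    have hrlt' : ‖A h1‖ ^ 2 < m + ε := hrlt
    have hform : ⟪R h1, h1⟫_ℝ < ε := by
      rw [hinner, hh1']; simp only [one_pow, mul_one]
      linarith [hrlt']
    have hn1 : (1:ℝ) ≤ C * ‖R h1‖ := by
      have := hinv h1; rwa [hh1'] at this
    have h2 := hCS h1
    have hsq : (1:ℝ) ≤ (C * ‖R h1‖) ^ 2 := by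
      nlinarith [hn1, mul_nonneg hCpos (norm_nonneg (R h1))]
    have h5 : C ^ 2 * ‖R h1‖ ^ 2 ≤ C ^ 2 * (‖R‖ * ⟪R h1, h1⟫_ℝ) :=
      mul_le_mul_of_nonneg_left h2 (by positivity)
    have h6 : C ^ 2 * (‖R‖ * ⟪R h1, h1⟫_ℝ) ≤ C ^ 2 * (‖R‖ * ε) :=
      mul_le_mul_of_nonneg_left
        (mul_le_mul_of_nonneg_left hform.le (norm_nonneg R)) (by positivity)
    nlinarith [hsq, h5, h6, hεeq, hεpos]
  have hmd : d ^ 2 ≤ m := by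
    by_contra hcon
    push_neg at hcon
    have hdpos : 0 < d := by
      rcases hd.lt_or_eq with h | h
      · exact h
      · exfalso; rw [← h] at hcon; nlinarith
    set s := Real.sqrt m with hsdef
    have hs0 : 0 ≤ s := Real.sqrt_nonneg m
    have hssq : s ^ 2 = m := Real.sq_sqrt hm0
    have hsd : s < d := by nlinarith
    have hu1 : IsUnit (algebraMap ℝ (H →L[ℝ] H) s - A) :=
      hgap s (by rw [abs_of_nonneg hs0]; exact hsd)
    have hu2 : IsUnit (algebraMap ℝ (H →L[ℝ] H) (-s) - A) :=
      hgap (-s) (by rw [abs_neg, abs_of_nonneg hs0]; exact hsd)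
    have hcomm : algebraMap ℝ (H →L[ℝ] H) s * A = A * algebraMap ℝ (H →L[ℝ] H) s :=
      Algebra.commutes s A
    have hsq : (algebraMap ℝ (H →L[ℝ] H) s) * (algebraMap ℝ (H →L[ℝ] H) s)
        = algebraMap ℝ (H →L[ℝ] H) m := by
      rw [← map_mul]; congr 1; rw [← hssq]; ring
    have hprod : (algebraMap ℝ (H →L[ℝ] H) s - A)
        * -(algebraMap ℝ (H →L[ℝ] H) (-s) - A) = -R := by
      have h1 : (algebraMap ℝ (H →L[ℝ] H)) (-s) = -(algebraMap ℝ (H →L[ℝ] H) s) :=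
        map_neg _ s
      rw [h1]
      calc (algebraMap ℝ (H →L[ℝ] H) s - A) * -(-(algebraMap ℝ (H →L[ℝ] H) s) - A)
          = algebraMap ℝ (H →L[ℝ] H) s * algebraMap ℝ (H →L[ℝ] H) s
            + (algebraMap ℝ (H →L[ℝ] H) s * A - A * algebraMap ℝ (H →L[ℝ] H) s)
            - A * A := by noncomm_ring
        _ = algebraMap ℝ (H →L[ℝ] H) m - A * A := by
            rw [hcomm, sub_self, add_zero, hsq]
        _ = -R := by rw [hR]; noncomm_ring
    have hunit := (hu1.mul hu2.neg)
    rw [hprod] at hunit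
    have := hunit.neg
    rw [neg_neg] at this
    exact hnotunit this
  intro h
  have hl := hlow h
  have hdd : d ^ 2 * ‖h‖ ^ 2 ≤ m * ‖h‖ ^ 2 := by nlinarith [sq_nonneg ‖h‖]
  nlinarith [norm_nonneg (A h), norm_nonneg h, mul_nonneg hd (norm_nonneg h)]

end Aux

/-- Mawhin's abstract theorem (bounded everywhere-defined case): if `L` is a bounded
self-adjoint operator on a real Hilbert space with `λ, μ ∈ σ(L)` and `(λ, μ) ⊆ ρ(L)`,
and `N` is everywhere differentiable with self-adjoint derivatives satisfying
`qI ≤ N'(x) ≤ pI` for some `λ < q ≤ p < μ`, then `L - N` is bijective with a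
Lipschitz inverse. -/
theorem mawhin_surjectivity
    {H : Type*} [NormedAddCommGroup H] [InnerProductSpace ℝ H] [CompleteSpace H]
    (L : H →L[ℝ] H) (hL : IsSelfAdjoint L)
    (lam mu : ℝ) (hlm : lam < mu)
    (hlam : lam ∈ spectrum ℝ L) (hmu : mu ∈ spectrum ℝ L)
    (hres : ∀ x ∈ Set.Ioo lam mu, x ∉ spectrum ℝ L)
    (N : H → H) (N' : H → H →L[ℝ] H)
    (hN : ∀ x : H, HasFDerivAt N (N' x) x)
    (hN'sa : ∀ x : H, IsSelfAdjoint (N' x))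
    (q p : ℝ) (hlq : lam < q) (hqp : q ≤ p) (hpm : p < mu)
    (hlower : ∀ x h : H, q * ‖h‖ ^ 2 ≤ ⟪N' x h, h⟫_ℝ)
    (hupper : ∀ x h : H, ⟪N' x h, h⟫_ℝ ≤ p * ‖h‖ ^ 2) :
    Function.Bijective (fun x : H => L x - N x) ∧
      ∃ K : ℝ≥0, LipschitzWith K (Function.invFun (fun x : H => L x - N x)) := by
  classical
  set c : ℝ := (p + q) / 2 with hc
  set k : ℝ := (p - q) / 2 with hk
  set d : ℝ := min (c - lam) (mu - c) with hd
  have hk0 : 0 ≤ k := by rw [hk]; linarith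
  have hkd : k < d := by
    rw [hd, lt_min_iff]; constructor <;> [skip; skip] <;> rw [hk, hc] <;> linarith
  have hdpos : 0 < d := lt_of_le_of_lt hk0 hkd
  set A : H →L[ℝ] H := algebraMap ℝ (H →L[ℝ] H) c - L with hA
  have hAsa : IsSelfAdjoint A := by
    rw [hA]
    refine IsSelfAdjoint.sub ?_ hL
    rw [Algebra.algebraMap_eq_smul_one]
    exact (IsSelfAdjoint.all c).smul (IsSelfAdjoint.one (H →L[ℝ] H))
  have hgap : ∀ t : ℝ, |t| < d → IsUnit (algebraMap ℝ (H →L[ℝ] H) t - A) := by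
    intro t ht
    rw [abs_lt] at ht
    have hmem : c - t ∈ Set.Ioo lam mu := by
      constructor
      · have : d ≤ c - lam := min_le_left _ _
        linarith [ht.2]
      · have : d ≤ mu - c := min_le_right _ _
        linarith [ht.1]
    have hunit : IsUnit (algebraMap ℝ (H →L[ℝ] H) (c - t) - L) :=
      spectrum.notMem_iff.mp (hres _ hmem)
    have heq : algebraMap ℝ (H →L[ℝ] H) t - A
        = -(algebraMap ℝ (H →L[ℝ] H) (c - t) - L) := by
      rw [hA, map_sub]; noncomm_ring
    rw [heq]
    exact hunit.neg
  have hAcoer : ∀ h : H, d * ‖h‖ ≤ ‖A h‖ :=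
    selfadjoint_coercive_of_gap A hAsa d hdpos.le hgap
  -- the nonlinear part
  set M : H → H := fun x => c • x - N x with hM
  set T : H → H →L[ℝ] H := fun x => c • (1 : H →L[ℝ] H) - N' x with hT
  have hTd : ∀ x : H, HasFDerivAt M (T x) x := by
    intro x
    exact ((hasFDerivAt_id x).const_smul c).sub (hN x)
  have hTsa : ∀ x : H, IsSelfAdjoint (T x) :=
    fun x => ((IsSelfAdjoint.all c).smul (IsSelfAdjoint.one (H →L[ℝ] H))).sub (hN'sa x)
  have hTbound : ∀ x h : H, |⟪T x h, h⟫_ℝ| ≤ k * ‖h‖ ^ 2 := by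
    intro x h
    have happ : T x h = c • h - N' x h := by
      simp [hT, ContinuousLinearMap.sub_apply, ContinuousLinearMap.smul_apply,
        ContinuousLinearMap.one_apply]
    rw [happ, inner_sub_left, real_inner_smul_left, real_inner_self_eq_norm_sq]
    rw [abs_le]
    constructor
    · have := hupper x h
      rw [hk, hc]; linarith
    · have := hlower x h
      rw [hk, hc]; linarith
  have hTnorm : ∀ x : H, ‖T x‖ ≤ k := by
    intro x
    refine ContinuousLinearMap.opNorm_le_bound _ hk0 ?_
    intro h
    exact selfadjoint_pointwise_norm_le (T x) (hTsa x) k hk0 (hTbound x) h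
  have hMlip : ∀ x y : H, ‖M x - M y‖ ≤ k * ‖x - y‖ := by
    intro x y
    exact Convex.norm_image_sub_le_of_norm_hasFDerivWithin_le
      (fun z _ => (hTd z).hasFDerivWithinAt) (fun z _ => hTnorm z) convex_univ
      (Set.mem_univ y) (Set.mem_univ x)
  set F : H → H := fun x => L x - N x with hF
  have hFMA : ∀ x : H, F x = M x - A x := by
    intro x
    simp only [hF, hM, hA, ContinuousLinearMap.sub_apply,
      Algebra.algebraMap_eq_smul_one, ContinuousLinearMap.smul_apply,
      ContinuousLinearMap.one_apply]
    abel
  -- key lower estimate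
  have hkey : ∀ x y : H, (d - k) * ‖x - y‖ ≤ ‖F x - F y‖ := by
    intro x y
    have h1 : F x - F y = (M x - M y) - A (x - y) := by
      rw [hFMA, hFMA, map_sub]; abel
    have h2 : ‖A (x - y)‖ - ‖M x - M y‖ ≤ ‖F x - F y‖ := by
      rw [h1]
      have := norm_sub_norm_le (A (x - y)) (M x - M y)
      have h3 : ‖A (x - y) - (M x - M y)‖ = ‖(M x - M y) - A (x - y)‖ := norm_sub_rev _ _
      linarith
    have := hAcoer (x - y)
    have := hMlip x y
    nlinarith [norm_nonneg (x - y)]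
  have hdk : 0 < d - k := by linarith
  -- injectivity
  have hinj : Function.Injective F := by
    intro x y hxy
    have := hkey x y
    rw [hxy, sub_self, norm_zero] at this
    have : ‖x - y‖ ≤ 0 := by nlinarith
    have : x - y = 0 := by
      rw [← norm_le_zero_iff]; exact this
    exact sub_eq_zero.mp this
  -- surjectivity via contraction mapping
  obtain ⟨u, hu⟩ := hgap 0 (by rwa [abs_zero])
  have hu' : (↑u : H →L[ℝ] H) = -A := by rw [hu]; simp
  set B : H →L[ℝ] H := -(↑u⁻¹ : H →L[ℝ] H) with hB
  have hAB : ∀ z : H, A (B z) = z := by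
    intro z
    have h2 : ((↑u : H →L[ℝ] H)) (((↑u⁻¹ : H →L[ℝ] H)) z) = z := by
      have h1 : ((↑u * ↑u⁻¹ : H →L[ℝ] H)) z = z := by rw [u.mul_inv]; rfl
      exact h1
    rw [hu'] at h2
    rw [ContinuousLinearMap.neg_apply] at h2
    rw [hB, ContinuousLinearMap.neg_apply, map_neg]
    exact h2
  have hBnorm : ∀ z : H, ‖B z‖ ≤ d⁻¹ * ‖z‖ := by
    intro z
    have h1 := hAcoer (B z)
    rw [hAB z] at h1
    rw [inv_mul_eq_div, le_div_iff₀ hdpos]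
    linarith [h1]
  have hsurj : Function.Surjective F := by
    intro y
    haveI : Nonempty H := ⟨0⟩
    set Φ : H → H := fun x => B (M x - y) with hΦ
    have hΦlip : LipschitzWith (Real.toNNReal (k / d)) Φ := by
      apply LipschitzWith.of_dist_le_mul
      intro x x'
      rw [Real.coe_toNNReal _ (by positivity)]
      rw [dist_eq_norm, dist_eq_norm]
      have h1 : Φ x - Φ x' = B (M x - M x') := by
        rw [hΦ]; rw [← map_sub]; congr 1; abel
      rw [h1]
      calc ‖B (M x - M x')‖ ≤ d⁻¹ * ‖M x - M x'‖ := hBnorm _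
        _ ≤ d⁻¹ * (k * ‖x - x'‖) := by
            apply mul_le_mul_of_nonneg_left (hMlip x x') (by positivity)
        _ = k / d * ‖x - x'‖ := by rw [div_eq_inv_mul]; ring
    have hΦcontr : ContractingWith (Real.toNNReal (k / d)) Φ := by
      constructor
      · rw [← Real.toNNReal_one]
        apply (Real.toNNReal_lt_toNNReal_iff one_pos).mpr
        rw [div_lt_one hdpos]; exact hkd
      · exact hΦlip
    set x := ContractingWith.fixedPoint Φ hΦcontr with hxdef
    have hfix : Φ x = x := hΦcontr.fixedPoint_isFixedPt
    refine ⟨x, ?_⟩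
    have h1 : A x = M x - y := by
      conv_lhs => rw [← hfix]
      exact hAB _
    show F x = y
    rw [hFMA, h1]; abel
  refine ⟨⟨hinj, hsurj⟩, Real.toNNReal ((d - k)⁻¹), ?_⟩
  apply LipschitzWith.of_dist_le_mul
  intro y y'
  rw [Real.coe_toNNReal _ (by positivity)]
  have hx : F (Function.invFun F y) = y := Function.rightInverse_invFun hsurj y
  have hx' : F (Function.invFun F y') = y' := Function.rightInverse_invFun hsurj y'
  rw [dist_eq_norm, dist_eq_norm]
  have hk2 := hkey (Function.invFun F y) (Function.invFun F y')
  rw [hx, hx'] at hk2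
  rw [inv_mul_eq_div, le_div_iff₀ hdk]
  linarith [hk2]
end

section
/- Let r ≥ 1 be an integer and let q : ℝ → ℝ be a continuous 2π-periodic function satisfying (r-1)² < q(t) < r² for all t ∈ ℝ. Then the only C² 2π-periodic function h : ℝ → ℝ satisfying -h''(t) = q(t) h(t) for all t ∈ ℝ is h ≡ 0. -/
open Real

open Set Filter Topology

private lemma smooth_facts (h : ℝ → ℝ) (hC2 : ContDiff ℝ 2 h) :
    (∀ t, HasDerivAt h (deriv h t) t) ∧ (∀ t, HasDerivAt (deriv h) (deriv (deriv h) t) t) ∧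
      Continuous (deriv (deriv h)) := by
  have h2 : ContDiff ℝ ((1:ℕ) + 1) h := by exact_mod_cast hC2
  obtain ⟨hdiff, -, h1⟩ := contDiff_succ_iff_deriv.mp h2
  have h1' : ContDiff ℝ ((0:ℕ) + 1) (deriv h) := by exact_mod_cast h1
  obtain ⟨hdiff1, -, h0⟩ := contDiff_succ_iff_deriv.mp h1'
  exact ⟨fun t => (hdiff t).hasDerivAt, fun t => (hdiff1 t).hasDerivAt,
    contDiff_zero.mp (by exact_mod_cast h0)⟩

private lemma uniq (r : ℕ) (q h : ℝ → ℝ)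
    (hqlow : ∀ t : ℝ, ((r : ℝ) - 1) ^ 2 < q t)
    (hqhigh : ∀ t : ℝ, q t < (r : ℝ) ^ 2)
    (hC2 : ContDiff ℝ 2 h)
    (heq : ∀ t : ℝ, -(deriv (deriv h) t) = q t * h t)
    (c : ℝ) (hc : h c = 0) (hc' : deriv h c = 0) : ∀ t : ℝ, h t = 0 := by
  obtain ⟨hd1, hd2, hcont2⟩ := smooth_facts h hC2
  set C : ℝ := 1 + (r : ℝ) ^ 2 with hCdef
  have hCpos : 0 < C := by positivity
  set E : ℝ → ℝ := fun t => h t ^ 2 + deriv h t ^ 2 with hEdef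
  have hE : ∀ t, HasDerivAt E (2 * h t * deriv h t + 2 * deriv h t * deriv (deriv h) t) t := by
    intro t
    have := ((hd1 t).pow 2).add ((hd2 t).pow 2)
    exact this.congr_deriv (by ring)
  have hEnonneg : ∀ t, 0 ≤ E t := fun t => by positivity
  have hbound : ∀ t, |2 * h t * deriv h t + 2 * deriv h t * deriv (deriv h) t| ≤ C * E t := by
    intro t
    have h'' : deriv (deriv h) t = -(q t * h t) := by linarith [heq t]
    simp only [hEdef]
    rw [h'', abs_le]
    have hq1 := hqlow t
    have hq2 := hqhigh t
    have h1 : 0 ≤ ((r:ℝ) - 1) ^ 2 := sq_nonneg _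
    have p1 : 0 ≤ (C + (1 - q t)) * (h t - deriv h t) ^ 2 :=
      mul_nonneg (by simp only [hCdef]; nlinarith) (sq_nonneg _)
    have p2 : 0 ≤ (C - (1 - q t)) * (h t + deriv h t) ^ 2 :=
      mul_nonneg (by simp only [hCdef]; nlinarith) (sq_nonneg _)
    have p3 : 0 ≤ (C - (1 - q t)) * (h t - deriv h t) ^ 2 :=
      mul_nonneg (by simp only [hCdef]; nlinarith) (sq_nonneg _)
    have p4 : 0 ≤ (C + (1 - q t)) * (h t + deriv h t) ^ 2 :=
      mul_nonneg (by simp only [hCdef]; nlinarith) (sq_nonneg _)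
    constructor
    · nlinarith [p3, p4]
    · nlinarith [p1, p2]
  have hEc : E c = 0 := by simp [hEdef, hc, hc']
  have hEzero : ∀ t, E t = 0 := by
    intro T
    rcases le_total c T with hcT | hTc
    · set F : ℝ → ℝ := fun t => E t * exp (-C * t) with hFdef
      have hF : ∀ t, HasDerivAt F
          ((2 * h t * deriv h t + 2 * deriv h t * deriv (deriv h) t - C * E t) * exp (-C * t)) t := by
        intro t
        have hlin : HasDerivAt (fun t : ℝ => -C * t) (-C) t := by
          simpa using (hasDerivAt_id t).const_mul (-C)
        have := (hE t).mul hlin.exp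
        exact this.congr_deriv (by ring)
      have hFanti : AntitoneOn F (Icc c T) := by
        apply antitoneOn_of_deriv_nonpos (convex_Icc _ _)
        · exact (Differentiable.continuous (fun t => (hF t).differentiableAt)).continuousOn
        · exact fun x _ => ((hF x).differentiableAt).differentiableWithinAt
        · intro x _
          rw [(hF x).deriv]
          apply mul_nonpos_of_nonpos_of_nonneg _ (exp_pos _).le
          have := le_trans (le_abs_self _) (hbound x)
          linarith
      have h1 : F T ≤ F c := hFanti ⟨le_refl c, hcT⟩ ⟨hcT, le_refl T⟩ hcT
      have h2 : F c = 0 := by simp [hFdef, hEc]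
      have h3 : 0 ≤ F T := mul_nonneg (hEnonneg T) (exp_pos _).le
      have h4 : F T = 0 := le_antisymm (h1.trans_eq h2) h3
      rcases mul_eq_zero.mp h4 with h5 | h5
      · exact h5
      · exact absurd h5 (exp_ne_zero _)
    · set G : ℝ → ℝ := fun t => E t * exp (C * t) with hGdef
      have hG : ∀ t, HasDerivAt G
          ((2 * h t * deriv h t + 2 * deriv h t * deriv (deriv h) t + C * E t) * exp (C * t)) t := by
        intro t
        have hlin : HasDerivAt (fun t : ℝ => C * t) C t := by
          simpa using (hasDerivAt_id t).const_mul C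
        have := (hE t).mul hlin.exp
        exact this.congr_deriv (by ring)
      have hGmono : MonotoneOn G (Icc T c) := by
        apply monotoneOn_of_deriv_nonneg (convex_Icc _ _)
        · exact (Differentiable.continuous (fun t => (hG t).differentiableAt)).continuousOn
        · exact fun x _ => ((hG x).differentiableAt).differentiableWithinAt
        · intro x _
          rw [(hG x).deriv]
          apply mul_nonneg _ (exp_pos _).le
          have := neg_abs_le (2 * h x * deriv h x + 2 * deriv h x * deriv (deriv h) x)
          have := hbound x
          linarith
      have h1 : G T ≤ G c := hGmono ⟨le_refl T, hTc⟩ ⟨hTc, le_refl c⟩ hTc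
      have h2 : G c = 0 := by simp [hGdef, hEc]
      have h3 : 0 ≤ G T := mul_nonneg (hEnonneg T) (exp_pos _).le
      have h4 : G T = 0 := le_antisymm (h1.trans_eq h2) h3
      rcases mul_eq_zero.mp h4 with h5 | h5
      · exact h5
      · exact absurd h5 (exp_ne_zero _)
  intro t
  have h1 : h t ^ 2 = 0 := by
    have := hEzero t
    simp only [hEdef] at this
    nlinarith [sq_nonneg (deriv h t)]
  exact pow_eq_zero_iff two_ne_zero |>.mp h1

private lemma gap_lower (r : ℕ) (hr : 1 ≤ r) (q h : ℝ → ℝ)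
    (hqhigh : ∀ t : ℝ, q t < (r : ℝ) ^ 2)
    (hC2 : ContDiff ℝ 2 h)
    (heq : ∀ t : ℝ, -(deriv (deriv h) t) = q t * h t)
    (a b : ℝ) (hab : a < b) (ha : h a = 0) (hb : h b = 0)
    (hb' : deriv h b ≤ 0)
    (hpos : ∀ t ∈ Ioo a b, 0 < h t) : a + π / r < b := by
  obtain ⟨hd1, hd2, hcont2⟩ := smooth_facts h hC2
  by_contra hcon
  push_neg at hcon
  have hrpos : (0:ℝ) < r := by exact_mod_cast hr
  set W : ℝ → ℝ := fun t => h t * ((r:ℝ) * cos ((r:ℝ) * (t - a))) -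
      deriv h t * sin ((r:ℝ) * (t - a)) with hWdef
  have hW : ∀ t, HasDerivAt W ((q t - (r:ℝ) ^ 2) * (h t * sin ((r:ℝ) * (t - a)))) t := by
    intro t
    have hlin : HasDerivAt (fun t : ℝ => (r:ℝ) * (t - a)) (r:ℝ) t := by
      simpa using ((hasDerivAt_id t).sub_const a).const_mul (r:ℝ)
    have hcos := hlin.cos
    have hsin := hlin.sin
    have h1 := ((hd1 t).mul (hcos.const_mul (r:ℝ))).sub ((hd2 t).mul hsin)
    have h'' : deriv (deriv h) t = -(q t * h t) := by linarith [heq t]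
    exact h1.congr_deriv (by rw [h'']; ring)
  have hanti : StrictAntiOn W (Icc a b) := by
    apply strictAntiOn_of_deriv_neg (convex_Icc _ _)
      (Differentiable.continuous (fun t => (hW t).differentiableAt)).continuousOn
    intro x hx
    rw [interior_Icc] at hx
    rw [(hW x).deriv]
    apply mul_neg_of_neg_of_pos
    · have := hqhigh x; linarith
    · apply mul_pos (hpos x hx)
      apply sin_pos_of_pos_of_lt_pi
      · exact mul_pos hrpos (by linarith [hx.1])
      · have h1 : x - a < π / r := by
          have := hx.2; linarith
        calc (r:ℝ) * (x - a) < (r:ℝ) * (π / r) := by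
              exact mul_lt_mul_of_pos_left h1 hrpos
          _ = π := by field_simp
  have hWa : W a = 0 := by simp [hWdef, ha]
  have hWb : 0 ≤ W b := by
    have hsin : 0 ≤ sin ((r:ℝ) * (b - a)) := by
      apply sin_nonneg_of_nonneg_of_le_pi
      · exact mul_nonneg hrpos.le (by linarith)
      · calc (r:ℝ) * (b - a) ≤ (r:ℝ) * (π / r) := by
              apply mul_le_mul_of_nonneg_left _ hrpos.le
              linarith
          _ = π := by field_simp
    have h2 : 0 ≤ (-deriv h b) * sin ((r:ℝ) * (b - a)) := mul_nonneg (by linarith) hsin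
    simp only [hWdef, hb, zero_mul, zero_sub]
    linarith [h2]
  have : W b < W a := hanti ⟨le_refl a, hab.le⟩ ⟨hab.le, le_refl b⟩ hab
  linarith

private lemma gap_upper (r : ℕ) (hr2 : 2 ≤ r) (q h : ℝ → ℝ)
    (hqlow : ∀ t : ℝ, ((r : ℝ) - 1) ^ 2 < q t)
    (hC2 : ContDiff ℝ 2 h)
    (heq : ∀ t : ℝ, -(deriv (deriv h) t) = q t * h t)
    (a b : ℝ) (hab : a < b) (ha : h a = 0) (hb : h b = 0)
    (hpos : ∀ t ∈ Ioo a b, 0 < h t) : b < a + π / ((r:ℝ) - 1) := by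
  obtain ⟨hd1, hd2, hcont2⟩ := smooth_facts h hC2
  by_contra hcon
  push_neg at hcon
  set s : ℝ := (r:ℝ) - 1 with hsdef
  have hspos : (0:ℝ) < s := by
    have : (2:ℝ) ≤ r := by exact_mod_cast hr2
    simp only [hsdef]; linarith
  set c : ℝ := a + π / s with hcdef
  have hcb : c ≤ b := hcon
  have hac : a < c := by
    have : 0 < π / s := by positivity
    simp only [hcdef]; linarith
  set W : ℝ → ℝ := fun t => deriv h t * sin (s * (t - a)) - h t * (s * cos (s * (t - a)))
    with hWdef
  have hW : ∀ t, HasDerivAt W ((s ^ 2 - q t) * (h t * sin (s * (t - a)))) t := by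
    intro t
    have hlin : HasDerivAt (fun t : ℝ => s * (t - a)) s t := by
      simpa using ((hasDerivAt_id t).sub_const a).const_mul s
    have hcos := hlin.cos
    have hsin := hlin.sin
    have h1 := ((hd2 t).mul hsin).sub ((hd1 t).mul (hcos.const_mul s))
    have h'' : deriv (deriv h) t = -(q t * h t) := by linarith [heq t]
    exact h1.congr_deriv (by rw [h'']; ring)
  have hanti : StrictAntiOn W (Icc a c) := by
    apply strictAntiOn_of_deriv_neg (convex_Icc _ _)
      (Differentiable.continuous (fun t => (hW t).differentiableAt)).continuousOn
    intro x hx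
    rw [interior_Icc] at hx
    rw [(hW x).deriv]
    apply mul_neg_of_neg_of_pos
    · have := hqlow x; linarith
    · apply mul_pos (hpos x ⟨hx.1, lt_of_lt_of_le hx.2 hcb⟩)
      apply sin_pos_of_pos_of_lt_pi
      · exact mul_pos hspos (by linarith [hx.1])
      · have h1 : x - a < π / s := by
          have := hx.2; simp only [hcdef] at this; linarith
        calc s * (x - a) < s * (π / s) := mul_lt_mul_of_pos_left h1 hspos
          _ = π := by field_simp
  have hWa : W a = 0 := by simp [hWdef, ha]
  have hWc : 0 ≤ W c := by
    have hsc : s * (c - a) = π := by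
      simp only [hcdef]
      field_simp
      ring
    have hhc : 0 ≤ h c := by
      rcases lt_or_eq_of_le hcb with h1 | h1
      · exact (hpos c ⟨hac, h1⟩).le
      · rw [h1, hb]
    simp only [hWdef, hsc, Real.sin_pi, Real.cos_pi, mul_zero, zero_sub]
    nlinarith [mul_nonneg hspos.le hhc]
  have : W c < W a := hanti ⟨le_refl a, hac.le⟩ ⟨hac.le, le_refl c⟩ hac
  linarith

private lemma next_pos (r : ℕ) (hr : 1 ≤ r) (q h : ℝ → ℝ)
    (hqlow : ∀ t : ℝ, ((r : ℝ) - 1) ^ 2 < q t)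
    (hqhigh : ∀ t : ℝ, q t < (r : ℝ) ^ 2)
    (hC2 : ContDiff ℝ 2 h)
    (hper : Function.Periodic h (2 * π))
    (heq : ∀ t : ℝ, -(deriv (deriv h) t) = q t * h t)
    (t₁ : ℝ) (ht₁ : h t₁ ≠ 0)
    (b : ℝ) (hb : h b = 0) (hbd : 0 < deriv h b) :
    ∃ b', h b' = 0 ∧ b + π / r < b' ∧ (2 ≤ r → b' < b + π / ((r:ℝ) - 1)) ∧
      (∀ t ∈ Ioo b b', h t ≠ 0) ∧ deriv h b' < 0 := by
  obtain ⟨hd1, hd2, hcont2⟩ := smooth_facts h hC2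
  have hcont : Continuous h := hC2.continuous
  -- positivity just to the right of b
  have hslope : Tendsto (slope h b) (𝓝[>] b) (𝓝 (deriv h b)) :=
    (hasDerivAt_iff_tendsto_slope.mp (hd1 b)).mono_left
      (nhdsWithin_mono b (fun x hx => ne_of_gt hx))
  have h1 : ∀ᶠ t in 𝓝[>] b, 0 < h t := by
    filter_upwards [hslope.eventually (eventually_gt_nhds hbd), self_mem_nhdsWithin]
      with t ht hmem
    have hs : slope h b t = h t / (t - b) := by
      simp [slope_def_field, hb]
    rw [hs] at ht
    have htb : 0 < t - b := sub_pos.mpr hmem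
    have := mul_pos ht htb
    rwa [div_mul_cancel₀] at this
    exact ne_of_gt htb
  obtain ⟨u, hu, hsub⟩ := mem_nhdsGT_iff_exists_Ioc_subset.mp h1
  set u₀ : ℝ := min u (b + 1) with hu₀def
  have hbu₀ : b < u₀ := lt_min hu (by linarith)
  have hu₀2π : u₀ ≤ b + 2 * π := by
    have : u₀ ≤ b + 1 := min_le_right _ _
    have := pi_gt_three
    linarith
  have hclear : ∀ t ∈ Ioc b u₀, 0 < h t := fun t ht =>
    hsub ⟨ht.1, le_trans ht.2 (min_le_left _ _)⟩
  -- the next zero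
  set S : Set ℝ := {t | h t = 0} ∩ Icc u₀ (b + 2 * π) with hSdef
  have hSc : IsClosed S := (isClosed_eq hcont continuous_const).inter isClosed_Icc
  have hSne : S.Nonempty := ⟨b + 2 * π, by show h (b + 2 * π) = 0; rw [hper b]; exact hb, hu₀2π, le_refl _⟩
  have hSbdd : BddBelow S := ⟨u₀, fun x hx => hx.2.1⟩
  set b₂ : ℝ := sInf S with hb₂def
  have hb₂S : b₂ ∈ S := hSc.csInf_mem hSne hSbdd
  have hb₂0 : h b₂ = 0 := hb₂S.1
  have hbb₂ : b < b₂ := lt_of_lt_of_le hbu₀ hb₂S.2.1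
  have hb₂le : b₂ ≤ b + 2 * π := hb₂S.2.2
  have hnz : ∀ t ∈ Ioo b b₂, h t ≠ 0 := by
    rintro t ⟨ht1, ht2⟩ ht0
    rcases le_or_gt t u₀ with hcase | hcase
    · exact (ne_of_gt (hclear t ⟨ht1, hcase⟩)) ht0
    · have : t ∈ S := ⟨ht0, hcase.le, le_trans ht2.le hb₂le⟩
      exact absurd (csInf_le hSbdd this) (not_le.mpr ht2)
  have hpos : ∀ t ∈ Ioo b b₂, 0 < h t := by
    intro t ht
    set w : ℝ := (b + min u₀ b₂) / 2 with hwdef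
    have hw1 : b < w := by
      have := lt_min hbu₀ hbb₂
      simp only [hwdef]; linarith
    have hw2 : w < u₀ := by
      have h3 : min u₀ b₂ ≤ u₀ := min_le_left _ _
      simp only [hwdef]; linarith
    have hw3 : w < b₂ := by
      have h3 : min u₀ b₂ ≤ b₂ := min_le_right _ _
      simp only [hwdef]; linarith
    have hwpos : 0 < h w := hclear w ⟨hw1, hw2.le⟩
    by_contra hle
    push_neg at hle
    have hlt : h t < 0 := lt_of_le_of_ne hle (hnz t ht)
    have h0mem : (0:ℝ) ∈ uIcc (h t) (h w) := by
      rw [mem_uIcc]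
      left; exact ⟨hlt.le, hwpos.le⟩
    obtain ⟨x, hx, hx0⟩ := intermediate_value_uIcc hcont.continuousOn h0mem
    have hxmem : x ∈ Ioo b b₂ := by
      rcases mem_uIcc.mp hx with ⟨h4, h5⟩ | ⟨h4, h5⟩
      · exact ⟨lt_of_lt_of_le ht.1 h4, lt_of_le_of_lt h5 hw3⟩
      · exact ⟨lt_of_lt_of_le hw1 h4, lt_of_le_of_lt h5 ht.2⟩
    exact hnz x hxmem hx0
  -- derivative at b₂ is negative
  have hb₂d_ne : deriv h b₂ ≠ 0 := by
    intro h0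
    exact ht₁ (uniq r q h hqlow hqhigh hC2 heq b₂ hb₂0 h0 t₁)
  have hb₂d_le : deriv h b₂ ≤ 0 := by
    have hnebot : (𝓝[Ioo b b₂] b₂).NeBot := by
      rw [← mem_closure_iff_nhdsWithin_neBot, closure_Ioo (ne_of_lt hbb₂)]
      exact ⟨hbb₂.le, le_refl _⟩
    have htend : Tendsto (slope h b₂) (𝓝[Ioo b b₂] b₂) (𝓝 (deriv h b₂)) :=
      (hasDerivAt_iff_tendsto_slope.mp (hd1 b₂)).mono_left
        (nhdsWithin_mono _ (fun x hx => ne_of_lt hx.2))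
    refine le_of_tendsto htend ?_
    filter_upwards [self_mem_nhdsWithin] with t ht
    have hs : slope h b₂ t = h t / (t - b₂) := by
      simp [slope_def_field, hb₂0]
    rw [hs]
    apply div_nonpos_of_nonneg_of_nonpos (hpos t ht).le
    linarith [ht.2]
  have hb₂d : deriv h b₂ < 0 := lt_of_le_of_ne hb₂d_le hb₂d_ne
  refine ⟨b₂, hb₂0, ?_, ?_, hnz, hb₂d⟩
  · exact gap_lower r hr q h hqhigh hC2 heq b b₂ hbb₂ hb hb₂0 hb₂d_le hpos
  · intro hr2
    exact gap_upper r hr2 q h hqlow hC2 heq b b₂ hbb₂ hb hb₂0 hpos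

private lemma deriv_neg_fun (h : ℝ → ℝ) : deriv (fun s => -h s) = fun s => -(deriv h s) :=
  funext fun s => deriv.neg

private lemma heq_neg (q h : ℝ → ℝ) (heq : ∀ t : ℝ, -(deriv (deriv h) t) = q t * h t) :
    ∀ t : ℝ, -(deriv (deriv (fun s => -h s)) t) = q t * (-h t) := by
  intro t
  rw [deriv_neg_fun h]
  have e2 : deriv (fun s => -(deriv h s)) t = -(deriv (deriv h) t) := deriv.neg
  rw [e2, neg_neg]
  have := heq t
  linarith [heq t]

private lemma per_neg (h : ℝ → ℝ) (hper : Function.Periodic h (2 * π)) :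
    Function.Periodic (fun s => -h s) (2 * π) := fun t => by simp [hper t]

private lemma next_any (r : ℕ) (hr : 1 ≤ r) (q h : ℝ → ℝ)
    (hqlow : ∀ t : ℝ, ((r : ℝ) - 1) ^ 2 < q t)
    (hqhigh : ∀ t : ℝ, q t < (r : ℝ) ^ 2)
    (hC2 : ContDiff ℝ 2 h)
    (hper : Function.Periodic h (2 * π))
    (heq : ∀ t : ℝ, -(deriv (deriv h) t) = q t * h t)
    (t₁ : ℝ) (ht₁ : h t₁ ≠ 0)
    (b : ℝ) (hb : h b = 0) :
    ∃ b', h b' = 0 ∧ b + π / r < b' ∧ (2 ≤ r → b' < b + π / ((r:ℝ) - 1)) ∧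
      (∀ t ∈ Ioo b b', h t ≠ 0) ∧ deriv h b * deriv h b' < 0 := by
  have hbd_ne : deriv h b ≠ 0 := by
    intro h0
    exact ht₁ (uniq r q h hqlow hqhigh hC2 heq b hb h0 t₁)
  rcases hbd_ne.lt_or_gt with hneg | hpos
  · -- apply next_pos to -h
    obtain ⟨b', h0, hgap, hup, hnz, hd⟩ := next_pos r hr q (fun s => -h s) hqlow hqhigh
      hC2.neg (per_neg h hper) (heq_neg q h heq) t₁ (by simpa using ht₁) b
      (by simpa using hb) (by rw [deriv_neg_fun h]; simpa using hneg)
    rw [deriv_neg_fun h] at hd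
    refine ⟨b', by simpa using h0, hgap, hup, fun t ht => by simpa using hnz t ht, ?_⟩
    have : 0 < deriv h b' := by simpa using hd
    exact mul_neg_of_neg_of_pos hneg this
  · obtain ⟨b', h0, hgap, hup, hnz, hd⟩ := next_pos r hr q h hqlow hqhigh hC2 hper heq
      t₁ ht₁ b hb hpos
    exact ⟨b', h0, hgap, hup, hnz, mul_neg_of_pos_of_neg hpos hd⟩

private lemma deriv_per (h : ℝ → ℝ) (hd1 : ∀ t, HasDerivAt h (deriv h t) t)
    (hper : Function.Periodic h (2 * π)) (t : ℝ) : deriv h (t + 2 * π) = deriv h t := by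
  have h1 : HasDerivAt (fun s => h (s + 2 * π)) (deriv h (t + 2 * π)) t := by
    exact ((hd1 (t + 2 * π)).comp t ((hasDerivAt_id t).add_const (2 * π))).congr_deriv (by simp)
  have h2 : (fun s => h (s + 2 * π)) = h := funext hper
  rw [h2] at h1
  exact (h1.deriv).symm

private lemma key (r : ℕ) (hr : 1 ≤ r) (q h : ℝ → ℝ)
    (hqlow : ∀ t : ℝ, ((r : ℝ) - 1) ^ 2 < q t)
    (hqhigh : ∀ t : ℝ, q t < (r : ℝ) ^ 2)
    (hC2 : ContDiff ℝ 2 h)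
    (hper : Function.Periodic h (2 * π))
    (heq : ∀ t : ℝ, -(deriv (deriv h) t) = q t * h t)
    (t₁ : ℝ) (ht₁ : h t₁ ≠ 0)
    (a : ℝ) (ha : h a = 0) (had : 0 < deriv h a) : False := by
  obtain ⟨hd1, hd2, hcont2⟩ := smooth_facts h hC2
  have hrpos : (0:ℝ) < r := by exact_mod_cast hr
  have hπr : 0 < π / r := by positivity
  have H := next_any r hr q h hqlow hqhigh hC2 hper heq t₁ ht₁
  choose f hf0 hfgap hfup hfnz hfsgn using H
  let z : ℕ → {x : ℝ // h x = 0} := fun n =>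
    Nat.rec ⟨a, ha⟩ (fun _ p => ⟨f p.1 p.2, hf0 p.1 p.2⟩) n
  have hz0 : (z 0).1 = a := rfl
  have hzsucc : ∀ n, (z (n + 1)).1 = f (z n).1 (z n).2 := fun n => rfl
  have hgap : ∀ n, (z n).1 + π / r < (z (n + 1)).1 := by
    intro n; rw [hzsucc n]; exact hfgap _ _
  have hup : ∀ n, 2 ≤ r → (z (n + 1)).1 < (z n).1 + π / ((r:ℝ) - 1) := by
    intro n h2; rw [hzsucc n]; exact hfup _ _ h2
  have hnz : ∀ n, ∀ t ∈ Set.Ioo (z n).1 (z (n + 1)).1, h t ≠ 0 := by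
    intro n; rw [hzsucc n]; exact hfnz _ _
  have hsgn : ∀ n, deriv h (z n).1 * deriv h (z (n + 1)).1 < 0 := by
    intro n; rw [hzsucc n]; exact hfsgn _ _
  have hmono : StrictMono (fun n => (z n).1) :=
    strictMono_nat_of_lt_succ (fun n => by have := hgap n; linarith)
  have hlow : ∀ n : ℕ, a + n * (π / r) ≤ (z n).1 := by
    intro n
    induction n with
    | zero => simp [hz0]
    | succ n ih =>
      have := hgap n
      push_cast
      linarith
  have hupper : 2 ≤ r → ∀ n : ℕ, (z n).1 ≤ a + n * (π / ((r:ℝ) - 1)) := by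
    intro h2 n
    induction n with
    | zero => simp [hz0]
    | succ n ih =>
      have := hup n h2
      push_cast
      linarith
  have hsign : ∀ n : ℕ, 0 < (-1:ℝ) ^ n * deriv h (z n).1 := by
    intro n
    induction n with
    | zero => simpa [hz0] using had
    | succ n ih =>
      have hp := hsgn n
      rcases Nat.even_or_odd n with he | ho
      · rw [he.neg_one_pow] at ih
        rw [(Even.add_one he).neg_one_pow]
        nlinarith
      · rw [ho.neg_one_pow] at ih
        rw [(Odd.add_one ho).neg_one_pow]
        nlinarith
  -- locate a + 2π among the z's
  have h2π0 : h (a + 2 * π) = 0 := by rw [hper a]; exact ha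
  have hd2π : deriv h (a + 2 * π) = deriv h a := deriv_per h hd1 hper a
  have hz2r : a + 2 * π < (z (2 * r)).1 := by
    obtain ⟨m, hm⟩ : ∃ m, 2 * r = m + 1 := ⟨2 * r - 1, by omega⟩
    have h1 := hgap m
    have h2 := hlow m
    have h3 : ((m:ℝ) + 1) * (π / r) = 2 * π := by
      have : ((m:ℝ) + 1) = 2 * r := by exact_mod_cast congrArg (Nat.cast : ℕ → ℝ) hm.symm
      rw [this]
      field_simp
    rw [hm]
    nlinarith
  have hex : ∃ k, (z k).1 ≤ a + 2 * π ∧ a + 2 * π < (z (k + 1)).1 := by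
    by_contra hno
    push_neg at hno
    have hall : ∀ n, (z n).1 ≤ a + 2 * π := by
      intro n
      induction n with
      | zero => rw [hz0]; linarith [pi_pos]
      | succ n ih => exact hno n ih
    exact absurd (hall (2 * r)) (not_le.mpr hz2r)
  obtain ⟨k, hk1, hk2⟩ := hex
  have hzk : (z k).1 = a + 2 * π := by
    rcases eq_or_lt_of_le hk1 with h1 | h1
    · exact h1
    · exact absurd h2π0 (hnz k _ ⟨h1, hk2⟩)
  have hk_pos : 1 ≤ k := by
    by_contra hk0
    push_neg at hk0
    interval_cases k
    rw [hz0] at hzk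
    linarith [pi_pos]
  have hk_lt : k < 2 * r := by
    have : (z k).1 < (z (2 * r)).1 := by rw [hzk]; exact hz2r
    exact hmono.lt_iff_lt.mp this
  have hk_ge : 2 * r - 1 ≤ k := by
    rcases le_or_gt 2 r with h2 | h2
    · obtain ⟨m, hm⟩ : ∃ m, k = m + 1 := ⟨k - 1, by omega⟩
      have hspos : (0:ℝ) < (r:ℝ) - 1 := by
        have : (2:ℝ) ≤ r := by exact_mod_cast h2
        linarith
      have h3 := hup m h2
      have h4 := hupper h2 m
      have h5 : (z k).1 < a + ((m:ℝ) + 1) * (π / ((r:ℝ) - 1)) := by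
        rw [hm]; nlinarith
      have h6 : 2 * π < ((m:ℝ) + 1) * (π / ((r:ℝ) - 1)) := by
        rw [hzk] at h5; linarith
      rw [← mul_div_assoc] at h6
      have h7 := (lt_div_iff₀ hspos).mp h6
      have h8 : ((2 * r : ℕ) : ℝ) < ((k + 2 : ℕ) : ℝ) := by
        push_cast
        rw [hm]
        push_cast
        nlinarith [pi_pos]
      have h9 : 2 * r < k + 2 := by exact_mod_cast h8
      omega
    · omega
  have hk_eq : k = 2 * r - 1 := by omega
  have hodd : Odd k := by
    rw [hk_eq]
    exact ⟨r - 1, by omega⟩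
  have := hsign k
  rw [hodd.neg_one_pow, hzk, hd2π] at this
  linarith

/-- Non-degeneracy with a variable potential: if the continuous `2π`-periodic
potential `q` satisfies `(r-1)² < q(t) < r²` for all `t`, then the only `C²`
`2π`-periodic solution of `-h = q h` is the zero function. -/
theorem no_nontrivial_solution_between_eigenvalues
    (r : ℕ) (hr : 1 ≤ r)
    (q : ℝ → ℝ) (hqc : Continuous q) (hqper : Function.Periodic q (2 * π))
    (hqlow : ∀ t : ℝ, ((r : ℝ) - 1) ^ 2 < q t)
    (hqhigh : ∀ t : ℝ, q t < (r : ℝ) ^ 2)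
    (h : ℝ → ℝ) (hC2 : ContDiff ℝ 2 h)
    (hper : Function.Periodic h (2 * π))
    (heq : ∀ t : ℝ, -(deriv (deriv h) t) = q t * h t) :
    ∀ t : ℝ, h t = 0 := by
  obtain ⟨hd1, hd2, hcont2⟩ := smooth_facts h hC2
  have hcont : Continuous h := hC2.continuous
  have hqpos : ∀ t, 0 < q t := fun t => lt_of_le_of_lt (sq_nonneg _) (hqlow t)
  by_contra hcon
  push_neg at hcon
  obtain ⟨t₁, ht₁⟩ := hcon
  -- h has a zero
  have hzero : ∃ a, h a = 0 := by
    by_contra hz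
    push_neg at hz
    have hsign : (∀ t, 0 < h t) ∨ (∀ t, h t < 0) := by
      rcases (hz 0).lt_or_gt with h0 | h0
      · right
        intro t
        rcases (hz t).lt_or_gt with h1 | h1
        · exact h1
        · exfalso
          have h0mem : (0:ℝ) ∈ uIcc (h 0) (h t) := by
            rw [mem_uIcc]; left; exact ⟨h0.le, h1.le⟩
          obtain ⟨x, _, hx0⟩ := intermediate_value_uIcc hcont.continuousOn h0mem
          exact hz x hx0
      · left
        intro t
        rcases (hz t).lt_or_gt with h1 | h1
        · exfalso
          have h0mem : (0:ℝ) ∈ uIcc (h t) (h 0) := by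
            rw [mem_uIcc]; left; exact ⟨h1.le, h0.le⟩
          obtain ⟨x, _, hx0⟩ := intermediate_value_uIcc hcont.continuousOn h0mem
          exact hz x hx0
        · exact h1
    have hint : ∫ t in (0:ℝ)..(2 * π), deriv (deriv h) t = deriv h (2 * π) - deriv h 0 :=
      intervalIntegral.integral_deriv_eq_sub (fun x _ => (hd2 x).differentiableAt)
        (hcont2.intervalIntegrable _ _)
    have hper' : deriv h (2 * π) = deriv h 0 := by
      have := deriv_per h hd1 hper 0
      simpa using this
    have hint0 : ∫ t in (0:ℝ)..(2 * π), deriv (deriv h) t = 0 := by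
      rw [hint, hper', sub_self]
    rcases hsign with hp | hn
    · have : 0 < ∫ t in (0:ℝ)..(2 * π), -(deriv (deriv h) t) := by
        apply intervalIntegral.intervalIntegral_pos_of_pos
          ((hcont2.neg).intervalIntegrable _ _)
        · intro x
          have := heq x
          have := mul_pos (hqpos x) (hp x)
          simp only [Pi.neg_apply]
          linarith
        · positivity
      rw [intervalIntegral.integral_neg, hint0, neg_zero] at this
      exact lt_irrefl 0 this
    · have : 0 < ∫ t in (0:ℝ)..(2 * π), deriv (deriv h) t := by
        apply intervalIntegral.intervalIntegral_pos_of_pos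
          (hcont2.intervalIntegrable _ _)
        · intro x
          have h1 := heq x
          have h2 := mul_pos (hqpos x) (neg_pos.mpr (hn x))
          nlinarith
        · positivity
      rw [hint0] at this
      exact lt_irrefl 0 this
  obtain ⟨a, ha⟩ := hzero
  have had_ne : deriv h a ≠ 0 := by
    intro h0
    exact ht₁ (uniq r q h hqlow hqhigh hC2 heq a ha h0 t₁)
  rcases had_ne.lt_or_gt with hneg | hpos
  · refine key r hr q (fun s => -h s) hqlow hqhigh hC2.neg (per_neg h hper)
      (heq_neg q h heq) t₁ (by simpa using ht₁) a (by simpa using ha) ?_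
    rw [deriv_neg_fun h]
    simpa using hneg
  · exact key r hr q h hqlow hqhigh hC2 hper heq t₁ ht₁ a ha hpos
end
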